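/- arXiv:1411.4559 — 5 statements merged into one kernel-verified Lean document; each statement's English description precedes it below -/
import Mathlib

section
/- Let H be a complex Hilbert space and (x_n)_{n∈ℕ} a sequence in H. Then (x_n) is a Parseval frame for H if and only if there exist a complex Hilbert space K, a linear isometry V : H → K, and an orthonormal basis (e_n)_{n∈ℕ} of K such that x_n = V*(e_n) for all n, where V* denotes the Hilbert-space adjoint of V (this expresses that, identifying H with V(H), each x_n is the orthogonal compression P e_n of e_n, P being the orthogonal projection of K onto H). -/
universe u

noncomputable section

open scoped ComplexInnerProductSpace in
instance ULift.instInner {E : Type*} [NormedAddCommGroup E] [InnerProductSpace ℂ E] :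
    Inner ℂ (ULift.{u} E) :=
  ⟨fun x y => inner ℂ x.down y.down⟩

instance ULift.instInnerProductSpace {E : Type*} [NormedAddCommGroup E]
    [InnerProductSpace ℂ E] : InnerProductSpace ℂ (ULift.{u} E) where
  norm_sq_eq_re_inner x := norm_sq_eq_re_inner (𝕜 := ℂ) x.down
  conj_inner_symm x y := inner_conj_symm (𝕜 := ℂ) x.down y.down
  add_left x y z := inner_add_left (𝕜 := ℂ) x.down y.down z.down
  smul_left x y r := inner_smul_left (𝕜 := ℂ) x.down y.down r

/-- `ULift.down` as a linear isometry equivalence. -/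
def ULift.downLi {E : Type*} [NormedAddCommGroup E] [InnerProductSpace ℂ E] :
    ULift.{u} E ≃ₗᵢ[ℂ] E :=
  { ULift.moduleEquiv with norm_map' := fun _ => rfl }

end

open scoped ComplexInnerProductSpace ENNReal


/-- **Dilation characterization of Parseval frames** (Han–Larson).
A sequence `(xₙ)` in a complex Hilbert space `H` is a Parseval frame
(i.e. `∑ₙ |⟨v, xₙ⟩|² = ‖v‖²` for every `v`) if and only if there exist a complex
Hilbert space `K`, a linear isometry `V : H → K` and an orthonormal basis `(eₙ)`
of `K` such that `xₙ = V* eₙ` for all `n`. -/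
theorem parseval_frame_iff_orthonormal_basis_dilation
    {H : Type u} [NormedAddCommGroup H] [InnerProductSpace ℂ H] [CompleteSpace H]
    (x : ℕ → H) :
    (∀ v : H, HasSum (fun n : ℕ => ‖(inner ℂ v (x n) : ℂ)‖ ^ 2) (‖v‖ ^ 2)) ↔
      ∃ (K : Type u) (_ : NormedAddCommGroup K) (_ : InnerProductSpace ℂ K)
        (_ : CompleteSpace K) (V : H →ₗᵢ[ℂ] K) (e : HilbertBasis ℕ ℂ K),
        ∀ n : ℕ, (ContinuousLinearMap.adjoint V.toContinuousLinearMap) (e n) = x n := by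
  constructor
  · intro hP
    classical
    -- the analysis operator into ℓ²
    have hmem : ∀ v : H, Memℓp (fun n : ℕ => (⟪x n, v⟫ : ℂ)) 2 := by
      intro v
      apply memℓp_gen
      have := (hP v).summable
      simp only [ENNReal.toReal_ofNat]
      convert this using 2 with n
      rw [← norm_inner_symm]
      norm_num
    set K := ULift.{u} (lp (fun _ : ℕ => ℂ) 2) with hK
    let T : H →ₗ[ℂ] lp (fun _ : ℕ => ℂ) 2 :=
      { toFun := fun v => ⟨fun n => (⟪x n, v⟫ : ℂ), hmem v⟩
        map_add' := by
          intro u v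
          ext n
          simp [inner_add_right]
          rfl
        map_smul' := by
          intro c v
          ext n
          simp [inner_smul_right] }
    have hTnorm : ∀ v : H, ‖T v‖ = ‖v‖ := by
      intro v
      have h2 : (0:ℝ) < (2 : ℝ≥0∞).toReal := by norm_num
      have := lp.norm_rpow_eq_tsum h2 (T v)
      have hsum : ∑' n : ℕ, ‖(⟪x n, v⟫ : ℂ)‖ ^ (2:ℝ) = ‖v‖ ^ 2 := by
        rw [← (hP v).tsum_eq]
        congr 1 with n
        rw [← norm_inner_symm]
        norm_num
      rw [ENNReal.toReal_ofNat] at this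
      simp only [Real.rpow_two] at this
      have h4 : ‖T v‖ ^ 2 = ‖v‖ ^ 2 := by
        rw [this, ← hsum]
        congr 1 with n
        simp only [Real.rpow_two, ← norm_pow]
        rfl
      have := congrArg Real.sqrt h4
      rwa [Real.sqrt_sq (norm_nonneg _), Real.sqrt_sq (norm_nonneg _)] at this
    let V : H →ₗᵢ[ℂ] K := (ULift.downLi.symm.toLinearIsometry).comp ⟨T, hTnorm⟩
    let e : HilbertBasis ℕ ℂ K := HilbertBasis.ofRepr ULift.downLi
    refine ⟨K, inferInstance, inferInstance, inferInstance, V, e, fun n => ?_⟩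
    apply ext_inner_right ℂ
    intro v
    rw [ContinuousLinearMap.adjoint_inner_left]
    have he : e n = ULift.up (lp.single 2 n (1:ℂ)) := by
      rw [← e.repr_symm_single]; rfl
    have hV : V.toContinuousLinearMap v = ULift.up (T v) := rfl
    rw [he, hV]
    show ⟪lp.single 2 n (1:ℂ), T v⟫ = ⟪x n, v⟫
    rw [lp.inner_single_left]
    simp
    rfl
  · rintro ⟨K, _, _, _, V, e, h⟩
    intro v
    have h1 := e.hasSum_inner_mul_inner (V v) (V v)
    have h2 := h1.mapL Complex.reCLM
    have h3 : ∀ n : ℕ, Complex.reCLM (⟪V v, e n⟫ * ⟪e n, V v⟫) = ‖(⟪v, x n⟫ : ℂ)‖ ^ 2 := by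
      intro n
      have hx : (⟪v, x n⟫ : ℂ) = ⟪V v, e n⟫ := by
        rw [← h n, ContinuousLinearMap.adjoint_inner_right]
        rfl
      have hc : (⟪e n, V v⟫ : ℂ) = starRingEnd ℂ ⟪V v, e n⟫ :=
        (inner_conj_symm _ _).symm
      rw [hx, hc, Complex.mul_conj]
      simp [Complex.normSq_eq_norm_sq]
      norm_cast
    have h4 : Complex.reCLM (⟪V v, V v⟫ : ℂ) = ‖v‖ ^ 2 := by
      have : (⟪V v, V v⟫ : ℂ) = (‖v‖ : ℂ) ^ 2 := by
        rw [inner_self_eq_norm_sq_to_K, V.norm_map]; rfl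
      rw [this]
      simp only [Complex.reCLM_apply, ← Complex.ofReal_pow, Complex.ofReal_re]
    rw [h4] at h2
    simp only [h3] at h2
    exact h2
end

section
/- Let H be a complex Hilbert space and (x_n)_{n∈ℕ} a sequence in H. Then (x_n) is a frame for H if and only if there exist a complex Hilbert space K, a linear isometry V : H → K, and a Riesz basis (v_n)_{n∈ℕ} of K such that x_n = V*(v_n) for all n, where V* denotes the Hilbert-space adjoint of V (i.e., identifying H with V(H), each x_n is the orthogonal compression of v_n onto H). -/
universe u

/-- A sequence `(xₙ)` in a complex Hilbert space is a frame if there are constants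
`0 < A ≤ B < ∞` with `A‖v‖² ≤ ∑ₙ |⟨v, xₙ⟩|² ≤ B‖v‖²` for all `v`. -/
def IsFrame {H : Type u} [NormedAddCommGroup H] [InnerProductSpace ℂ H]
    (x : ℕ → H) : Prop :=
  ∃ A B : ℝ, 0 < A ∧ A ≤ B ∧ ∀ v : H,
    Summable (fun n : ℕ => ‖(inner ℂ v (x n) : ℂ)‖ ^ 2) ∧
    A * ‖v‖ ^ 2 ≤ ∑' n : ℕ, ‖(inner ℂ v (x n) : ℂ)‖ ^ 2 ∧
    ∑' n : ℕ, ‖(inner ℂ v (x n) : ℂ)‖ ^ 2 ≤ B * ‖v‖ ^ 2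


noncomputable section FrameDilationAuxSection

open Submodule TopologicalSpace

local notation "⟪" x ", " y "⟫" => @inner ℂ _ _ x y
local notation "L2" => lp (fun _ : ℕ => ℂ) 2

namespace FrameDilationAux

lemma l2_norm_sq (f : L2) : ‖f‖ ^ 2 = ∑' n, ‖f n‖ ^ 2 := by
  have h := lp.norm_rpow_eq_tsum (p := 2) (by norm_num) f
  rw [ENNReal.toReal_ofNat, show (2:ℝ) = ((2:ℕ):ℝ) by norm_num] at h
  simpa [Real.rpow_natCast] using h

lemma l2_summable_sq (f : L2) : Summable fun n => ‖f n‖ ^ 2 := by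
  have h := (lp.memℓp f).summable (p := 2) (by norm_num)
  rw [ENNReal.toReal_ofNat, show (2:ℝ) = ((2:ℕ):ℝ) by norm_num] at h
  simpa [Real.rpow_natCast] using h

lemma memℓp_two {f : ∀ _ : ℕ, ℂ} (h : Summable fun n => ‖f n‖ ^ 2) : Memℓp f 2 := by
  apply memℓp_gen
  rw [ENNReal.toReal_ofNat, show (2:ℝ) = ((2:ℕ):ℝ) by norm_num]
  simpa [Real.rpow_natCast] using h

variable {E : Type*} [NormedAddCommGroup E] [InnerProductSpace ℂ E]

lemma antilipschitz_of_le {F : Type*} [NormedAddCommGroup F] [InnerProductSpace ℂ F]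
    (f : E →L[ℂ] F) {c : ℝ} (hc : 0 < c) (h : ∀ v, c * ‖v‖ ≤ ‖f v‖) :
    AntilipschitzWith (⟨c, hc.le⟩ : NNReal)⁻¹ f := by
  refine AddMonoidHomClass.antilipschitz_of_bound f fun v => ?_
  have hcc : (((⟨c, hc.le⟩ : NNReal)⁻¹ : NNReal) : ℝ) = c⁻¹ := NNReal.coe_inv _
  rw [hcc, ← div_eq_inv_mul, le_div_iff₀ hc, mul_comm]
  exact h v

lemma injective_of_le {F : Type*} [NormedAddCommGroup F] [InnerProductSpace ℂ F]
    (f : E →L[ℂ] F) {c : ℝ} (hc : 0 < c) (h : ∀ v, c * ‖v‖ ≤ ‖f v‖) :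
    Function.Injective f := by
  intro a b hab
  have : f (a - b) = 0 := by rw [map_sub, hab, sub_self]
  have h2 := h (a - b)
  rw [this, norm_zero] at h2
  have : ‖a - b‖ = 0 := le_antisymm (by nlinarith [norm_nonneg (a-b)]) (norm_nonneg _)
  rwa [norm_sub_eq_zero_iff] at this

lemma ker_range_of_coercive [CompleteSpace E] (S : E →L[ℂ] E) {c : ℝ} (hc : 0 < c)
    (hcoer : ∀ v, c * ‖v‖ ^ 2 ≤ RCLike.re (⟪S v, v⟫))
    (hdense : ∀ v : E, (∀ u : E, ⟪S u, v⟫ = 0) → v = 0) :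
    LinearMap.ker (S : E →ₗ[ℂ] E) = ⊥ ∧ LinearMap.range (S : E →ₗ[ℂ] E) = ⊤ := by
  have hlow : ∀ v, c * ‖v‖ ≤ ‖S v‖ := by
    intro v
    rcases eq_or_ne v 0 with rfl | hv
    · simp
    · have h1 := hcoer v
      have h2 : RCLike.re (⟪S v, v⟫) ≤ ‖S v‖ * ‖v‖ :=
        le_trans (RCLike.re_le_norm _) (norm_inner_le_norm _ _)
      have hv' : 0 < ‖v‖ := norm_pos_iff.mpr hv
      nlinarith
  have hanti := antilipschitz_of_le S hc hlow
  constructor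
  · exact LinearMap.ker_eq_bot_of_injective (injective_of_le S hc hlow)
  · have hclosed : IsClosed (Set.range (⇑S)) := hanti.isClosed_range S.uniformContinuous
    have hset : (LinearMap.range (S : E →ₗ[ℂ] E) : Set E) = Set.range ⇑S := by
      ext y; simp [LinearMap.mem_range]
    have hcl2 : (LinearMap.range (S : E →ₗ[ℂ] E)).topologicalClosure = LinearMap.range (S : E →ₗ[ℂ] E) :=
      IsClosed.submodule_topologicalClosure_eq (hset ▸ hclosed)
    have horth : (LinearMap.range (S : E →ₗ[ℂ] E))ᗮ = ⊥ := by
      rw [Submodule.eq_bot_iff]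
      intro v hv
      exact hdense v fun u => hv _ (LinearMap.mem_range_self _ u)
    rw [← hcl2, Submodule.topologicalClosure_eq_top_iff]
    exact horth

lemma separableSpace_of_span (s : Set E) (hs : s.Countable)
    (hd : (span ℂ s).topologicalClosure = ⊤) : SeparableSpace E := by
  rw [← isSeparable_univ_iff]
  have h2 := hs.isSeparable.span (R := ℂ) |>.closure
  have h3 : closure ((span ℂ s : Submodule ℂ E) : Set E) = (Set.univ : Set E) := by
    have := congrArg (fun t : Submodule ℂ E => (t : Set E)) hd
    rw [← Submodule.topologicalClosure_coe]
    simpa using this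
  rwa [h3] at h2

lemma l2_not_fd : ¬ FiniteDimensional ℂ L2 := by
  intro h
  have hb := (default : HilbertBasis ℕ ℂ L2).orthonormal.linearIndependent
  haveI := hb.finite
  exact not_finite ℕ

lemma exists_hilbertBasis_nat (F : Type u) [NormedAddCommGroup F] [InnerProductSpace ℂ F]
    [CompleteSpace F] [SeparableSpace F] (hinf : ¬ FiniteDimensional ℂ F) :
    Nonempty (HilbertBasis ℕ ℂ F) := by
  obtain ⟨w, b, hb⟩ := exists_hilbertBasis ℂ F
  have hw_on : Orthonormal ℂ ((↑) : w → F) := hb ▸ b.orthonormal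
  have hdense : (span ℂ w).topologicalClosure = ⊤ := by
    have := b.dense_span
    rwa [hb, Subtype.range_coe] at this
  haveI : Countable w := by
    refine Pairwise.countable_of_isOpen_disjoint
      (s := fun i : w => Metric.ball (i : F) (1/2)) ?_ (fun i => Metric.isOpen_ball)
      (fun i => Metric.nonempty_ball.mpr (by norm_num))
    intro i j hij
    refine Metric.ball_disjoint_ball ?_
    have h1 : ‖(i : F)‖ = 1 := hw_on.1 i
    have h1' : ‖(j : F)‖ = 1 := hw_on.1 j
    have h2 : ‖(i : F) - j‖ ^ 2 = 2 := by
      rw [norm_sub_sq (𝕜 := ℂ), hw_on.2 hij]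
      simp [h1, h1']
      norm_num
    have h3 : ‖(i : F) - j‖ = Real.sqrt 2 := by
      rw [← h2, Real.sqrt_sq (norm_nonneg _)]
    rw [dist_eq_norm, h3]
    nlinarith [Real.sq_sqrt (by norm_num : (0:ℝ) ≤ 2), Real.sqrt_nonneg 2]
  haveI : Infinite w := by
    rw [Set.infinite_coe_iff]
    intro hfin
    apply hinf
    have hfd : FiniteDimensional ℂ (span ℂ w) := FiniteDimensional.span_of_finite ℂ hfin
    have hclosed : IsClosed ((span ℂ w : Submodule ℂ F) : Set F) :=
      Submodule.closed_of_finiteDimensional _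
    have htop : span ℂ w = ⊤ := by
      rw [← hdense]
      exact (IsClosed.submodule_topologicalClosure_eq hclosed).symm
    rw [htop] at hfd
    exact Module.Finite.equiv Submodule.topEquiv
  obtain ⟨d⟩ := nonempty_denumerable ↥w
  let g : ℕ ≃ w := (Denumerable.eqv ↥w).symm
  refine ⟨HilbertBasis.mk (hw_on.comp g g.injective) ?_⟩
  have hr : Set.range ((fun i : w => (i : F)) ∘ ⇑g) = Set.range (fun i : w => (i : F)) :=
    g.surjective.range_comp _
  rw [show (Set.range (Subtype.val ∘ ⇑g)) = Set.range (fun i : w => (i : F)) from hr,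
    Subtype.range_coe]
  exact hdense.ge



theorem reverse_dir {H : Type u} [NormedAddCommGroup H] [InnerProductSpace ℂ H] [CompleteSpace H]
    (x : ℕ → H)
    (h : ∃ (K : Type u) (_ : NormedAddCommGroup K) (_ : InnerProductSpace ℂ K)
        (_ : CompleteSpace K) (V : H →ₗᵢ[ℂ] K) (e : HilbertBasis ℕ ℂ K) (T : K ≃L[ℂ] K),
        ∀ n : ℕ, (ContinuousLinearMap.adjoint V.toContinuousLinearMap) (T (e n)) = x n) :
    IsFrame x := by
  obtain ⟨K, _, _, _, V, e, T, hT⟩ := h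
  set Vc := V.toContinuousLinearMap with hVc
  set Tc : K →L[ℂ] K := (T : K →L[ℂ] K) with hTc
  set Ts := ContinuousLinearMap.adjoint Tc with hTs
  set f := ContinuousLinearMap.adjoint ((T.symm : K →L[ℂ] K)) with hf
  have hfT : ∀ u : K, f (Ts u) = u := by
    intro u
    have h1 : Tc.comp ((T.symm : K →L[ℂ] K)) = ContinuousLinearMap.id ℂ K := by
      ext y
      simp [hTc]
    calc f (Ts u)
        = (f.comp Ts) u := rfl
      _ = (ContinuousLinearMap.adjoint (Tc.comp ((T.symm : K →L[ℂ] K)))) u := by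
          rw [ContinuousLinearMap.adjoint_comp]
      _ = u := by rw [h1, ContinuousLinearMap.adjoint_id, ContinuousLinearMap.id_apply]
  set a : ℝ := max ‖f‖ 1 with ha
  have ha1 : (1:ℝ) ≤ a := le_max_right _ _
  have ha0 : (0:ℝ) < a := lt_of_lt_of_le one_pos ha1
  refine ⟨(a ^ 2)⁻¹, max ((a ^ 2)⁻¹) (‖Ts‖ ^ 2), by positivity, le_max_left _ _, fun v => ?_⟩
  set z := Ts (Vc v) with hz
  have hpt : ∀ n : ℕ, ‖(inner ℂ v (x n) : ℂ)‖ ^ 2 = ‖e.repr z n‖ ^ 2 := by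
    intro n
    rw [e.repr_apply_apply]
    have h2 : (inner ℂ v (x n) : ℂ) = ⟪z, e n⟫ := by
      rw [← hT n, ContinuousLinearMap.adjoint_inner_right]
      exact (ContinuousLinearMap.adjoint_inner_left Tc (e n) (Vc v)).symm
    rw [h2, norm_inner_symm]
  have hVnorm : ‖Vc v‖ = ‖v‖ := V.norm_map v
  have hup : ‖z‖ ≤ ‖Ts‖ * ‖v‖ := by
    calc ‖z‖ ≤ ‖Ts‖ * ‖Vc v‖ := Ts.le_opNorm _
      _ = ‖Ts‖ * ‖v‖ := by rw [hVnorm]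
  have hlow : ‖v‖ ≤ a * ‖z‖ := by
    calc ‖v‖ = ‖Vc v‖ := hVnorm.symm
      _ = ‖f z‖ := by rw [hz, hfT]
      _ ≤ ‖f‖ * ‖z‖ := f.le_opNorm _
      _ ≤ a * ‖z‖ := by
          have := le_max_left ‖f‖ (1:ℝ)
          nlinarith [norm_nonneg z]
  have htsum : ∑' n : ℕ, ‖(inner ℂ v (x n) : ℂ)‖ ^ 2 = ‖z‖ ^ 2 := by
    rw [tsum_congr hpt, ← FrameDilationAux.l2_norm_sq (e.repr z)]
    rw [e.repr.norm_map]
  refine ⟨(FrameDilationAux.l2_summable_sq (e.repr z)).congr fun n => (hpt n).symm, ?_, ?_⟩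
  · rw [htsum, inv_mul_eq_div, div_le_iff₀ (by positivity)]
    nlinarith [norm_nonneg v, norm_nonneg z]
  · rw [htsum]
    have h3 : ‖z‖ ^ 2 ≤ ‖Ts‖ ^ 2 * ‖v‖ ^ 2 := by
      nlinarith [norm_nonneg z, norm_nonneg v, Ts.opNorm_nonneg]
    calc ‖z‖ ^ 2 ≤ ‖Ts‖ ^ 2 * ‖v‖ ^ 2 := h3
      _ ≤ max ((a ^ 2)⁻¹) (‖Ts‖ ^ 2) * ‖v‖ ^ 2 :=
          mul_le_mul_of_nonneg_right (le_max_right _ _) (by positivity)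

set_option maxHeartbeats 2000000 in
theorem forward_dir {H : Type u} [NormedAddCommGroup H] [InnerProductSpace ℂ H] [CompleteSpace H]
    (x : ℕ → H) (hfr : IsFrame x) :
    ∃ (K : Type u) (_ : NormedAddCommGroup K) (_ : InnerProductSpace ℂ K)
      (_ : CompleteSpace K) (V : H →ₗᵢ[ℂ] K) (e : HilbertBasis ℕ ℂ K) (T : K ≃L[ℂ] K),
      ∀ n : ℕ, (ContinuousLinearMap.adjoint V.toContinuousLinearMap) (T (e n)) = x n := by
  classical
  obtain ⟨A, B, hA, hAB, hf⟩ := hfr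
  have hB : 0 < B := lt_of_lt_of_le hA hAB
  have hsA : 0 < Real.sqrt A := Real.sqrt_pos.mpr hA
  have hsum : ∀ v : H, Summable fun n : ℕ => ‖(⟪x n, v⟫ : ℂ)‖ ^ 2 := fun v =>
    ((hf v).1).congr fun n => by rw [norm_inner_symm]
  have hspanH : (span ℂ (Set.range x)).topologicalClosure = ⊤ := by
    rw [Submodule.topologicalClosure_eq_top_iff, Submodule.eq_bot_iff]
    intro v hv
    have hvx : ∀ n : ℕ, (⟪v, x n⟫ : ℂ) = 0 := fun n => by
      have := hv (x n) (subset_span ⟨n, rfl⟩)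
      rw [← inner_conj_symm, this, map_zero]
    have h2 := (hf v).2.1
    have hz : (fun n : ℕ => ‖(inner ℂ v (x n) : ℂ)‖ ^ 2) = fun _ => (0:ℝ) :=
      funext fun n => by rw [hvx n]; simp
    rw [hz, tsum_zero] at h2
    have h3 : ‖v‖ ^ 2 ≤ 0 := le_of_mul_le_mul_left (by simpa using h2) hA
    exact norm_eq_zero.mp
      ((pow_eq_zero_iff (by norm_num : (2:ℕ) ≠ 0)).mp (le_antisymm h3 (sq_nonneg _)))
  haveI : SeparableSpace H :=
    FrameDilationAux.separableSpace_of_span _ (Set.countable_range x) hspanH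
  -- the analysis operator
  let Θ₀ : H →ₗ[ℂ] L2 :=
    { toFun := fun v => ⟨fun n => ⟪x n, v⟫, FrameDilationAux.memℓp_two (hsum v)⟩
      map_add' := fun v w => by
        apply Subtype.ext
        funext n
        simp only [inner_add_right]
        rfl
      map_smul' := fun c v => by
        apply Subtype.ext
        funext n
        simp only [inner_smul_right]
        rfl }
  have hnormsq : ∀ v : H, ‖Θ₀ v‖ ^ 2 = ∑' n : ℕ, ‖(⟪x n, v⟫ : ℂ)‖ ^ 2 := fun v =>
    FrameDilationAux.l2_norm_sq (Θ₀ v)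
  have hswap : ∀ v : H, ∑' n : ℕ, ‖(⟪x n, v⟫ : ℂ)‖ ^ 2 = ∑' n : ℕ, ‖(⟪v, x n⟫ : ℂ)‖ ^ 2 :=
    fun v => tsum_congr fun n => by rw [norm_inner_symm]
  have hup : ∀ v : H, ‖Θ₀ v‖ ^ 2 ≤ B * ‖v‖ ^ 2 := fun v => by
    rw [hnormsq, hswap]; exact (hf v).2.2
  have hlo : ∀ v : H, A * ‖v‖ ^ 2 ≤ ‖Θ₀ v‖ ^ 2 := fun v => by
    rw [hnormsq, hswap]; exact (hf v).2.1
  let Θ : H →L[ℂ] L2 := Θ₀.mkContinuous (Real.sqrt B) (fun v => by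
    have h1 : ‖Θ₀ v‖ ^ 2 ≤ (Real.sqrt B * ‖v‖) ^ 2 := by
      rw [mul_pow, Real.sq_sqrt hB.le]; exact hup v
    have h2 := Real.sqrt_le_sqrt h1
    rwa [Real.sqrt_sq (norm_nonneg _), Real.sqrt_sq (by positivity)] at h2)
  have hΘ₀ : ∀ v : H, Θ v = Θ₀ v := fun v => rfl
  have hΘapp : ∀ (v : H) (n : ℕ), (Θ v : ∀ _ : ℕ, ℂ) n = ⟪x n, v⟫ := fun v n => rfl
  have hΘlow : ∀ v : H, Real.sqrt A * ‖v‖ ≤ ‖Θ v‖ := fun v => by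
    have h1 : (Real.sqrt A * ‖v‖) ^ 2 ≤ ‖Θ v‖ ^ 2 := by
      rw [mul_pow, Real.sq_sqrt hA.le, hΘ₀]; exact hlo v
    have h2 := Real.sqrt_le_sqrt h1
    rwa [Real.sqrt_sq (by positivity), Real.sqrt_sq (norm_nonneg _)] at h2
  have hΘinj : Function.Injective Θ := FrameDilationAux.injective_of_le Θ hsA hΘlow
  have hanti := FrameDilationAux.antilipschitz_of_le Θ hsA hΘlow
  have hclosed : IsClosed (Set.range ⇑Θ) := hanti.isClosed_range Θ.uniformContinuous
  set R : Submodule ℂ L2 := LinearMap.range (Θ : H →ₗ[ℂ] L2) with hR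
  have hRset : (R : Set L2) = Set.range ⇑Θ := by ext y; simp [hR, LinearMap.mem_range]
  haveI : CompleteSpace R := (hRset ▸ hclosed).completeSpace_coe
  haveI : CompleteSpace ↥Rᗮ := (Submodule.isClosed_orthogonal R).completeSpace_coe
  set Θad : L2 →L[ℂ] H := ContinuousLinearMap.adjoint Θ with hΘad
  have hadj_single : ∀ n : ℕ, Θad (lp.single 2 n 1) = x n := by
    intro n
    apply ext_inner_left ℂ
    intro v
    rw [hΘad, ContinuousLinearMap.adjoint_inner_right, lp.inner_single_right,
      RCLike.inner_apply, show ((Θ v : ∀ _ : ℕ, ℂ) n) = ⟪x n, v⟫ from rfl, one_mul,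
      inner_conj_symm]
  have hΘad_vanish : ∀ m : L2, m ∈ Rᗮ → Θad m = 0 := by
    intro m hm
    apply ext_inner_left ℂ
    intro v
    rw [inner_zero_right, hΘad, ContinuousLinearMap.adjoint_inner_right]
    exact Submodule.inner_right_of_mem_orthogonal (LinearMap.mem_range_self _ v) hm
  -- the operator T' on L2
  set T' : L2 →L[ℂ] L2 := Θ.comp Θad + Rᗮ.subtypeL.comp (orthogonalProjection Rᗮ) with hT'
  have hT'app : ∀ g : L2, T' g = Θ (Θad g) + ↑(orthogonalProjection Rᗮ g) := fun g => rfl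
  have hre : ∀ g : L2, RCLike.re (⟪T' g, g⟫ : ℂ) =
      ‖Θad g‖ ^ 2 + ‖(orthogonalProjection Rᗮ g : L2)‖ ^ 2 := by
    intro g
    rw [hT'app, inner_add_left]
    have e1 : (⟪Θ (Θad g), g⟫ : ℂ) = ⟪Θad g, Θad g⟫ := by
      have := (ContinuousLinearMap.adjoint_inner_right Θ (Θad g) g).symm
      rwa [← hΘad] at this
    have e2 : (⟪(↑(orthogonalProjection Rᗮ g) : L2), g⟫ : ℂ) =
        ⟪(↑(orthogonalProjection Rᗮ g) : L2), ↑(orthogonalProjection Rᗮ g)⟫ := by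
      have hsub := Rᗮ.sub_starProjection_mem_orthogonal g
      have h0 := Submodule.inner_right_of_mem_orthogonal
        (orthogonalProjection Rᗮ g).2 hsub
      rw [inner_sub_right, sub_eq_zero] at h0
      exact h0
    rw [e1, e2, map_add, inner_self_eq_norm_sq, inner_self_eq_norm_sq]
  have haux : ∀ r : L2, r ∈ R → Real.sqrt A * ‖r‖ ≤ ‖Θad r‖ := by
    rintro r hr
    obtain ⟨h, rfl⟩ := LinearMap.mem_range.mp hr
    change Real.sqrt A * ‖Θ h‖ ≤ ‖Θad (Θ h)‖
    rcases eq_or_ne (Θ h) 0 with h0 | h0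
    · rw [h0]; simp
    have hpos : 0 < ‖Θ h‖ := norm_pos_iff.mpr h0
    have h1 : ‖(⟪Θad (Θ h), h⟫ : ℂ)‖ ≤ ‖Θad (Θ h)‖ * ‖h‖ := norm_inner_le_norm _ _
    have h2 : (⟪Θad (Θ h), h⟫ : ℂ) = ⟪Θ h, Θ h⟫ := by
      rw [hΘad]; exact ContinuousLinearMap.adjoint_inner_left Θ h (Θ h)
    have h3 : ‖Θ h‖ ^ 2 ≤ ‖(⟪Θ h, Θ h⟫ : ℂ)‖ := by
      rw [← inner_self_eq_norm_sq (𝕜 := ℂ)]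
      exact RCLike.re_le_norm _
    have h4 : Real.sqrt A * ‖h‖ ≤ ‖Θ h‖ := hΘlow h
    have h5 : ‖Θ h‖ ^ 2 ≤ ‖Θad (Θ h)‖ * ‖h‖ := by
      calc ‖Θ h‖ ^ 2 ≤ ‖(⟪Θ h, Θ h⟫ : ℂ)‖ := h3
        _ = ‖(⟪Θad (Θ h), h⟫ : ℂ)‖ := by rw [h2]
        _ ≤ ‖Θad (Θ h)‖ * ‖h‖ := h1
    nlinarith [norm_nonneg (Θad (Θ h)), norm_nonneg h]
  have hcoer : ∀ g : L2, min A 1 * ‖g‖ ^ 2 ≤ RCLike.re (⟪T' g, g⟫ : ℂ) := by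
    intro g
    rw [hre g]
    have hsplit := norm_sq_eq_add_norm_sq_projection g R
    have hg : g = ↑(orthogonalProjection R g) + ↑(orthogonalProjection Rᗮ g) :=
      (R.starProjection_add_starProjection_orthogonal g).symm
    have hΘadg : Θad g = Θad ↑(orthogonalProjection R g) := by
      conv_lhs => rw [hg]
      rw [map_add, hΘad_vanish _ (orthogonalProjection Rᗮ g).2, add_zero]
    have h6 : Real.sqrt A * ‖(↑(orthogonalProjection R g) : L2)‖ ≤ ‖Θad g‖ := by
      rw [hΘadg]; exact haux _ (orthogonalProjection R g).2
    have h7 : A * ‖(↑(orthogonalProjection R g) : L2)‖ ^ 2 ≤ ‖Θad g‖ ^ 2 := by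
      nlinarith [mul_self_le_mul_self
          (by positivity : (0:ℝ) ≤ Real.sqrt A * ‖(↑(orthogonalProjection R g) : L2)‖) h6,
        Real.sq_sqrt hA.le, norm_nonneg (↑(orthogonalProjection R g) : L2)]
    have h8 : ‖g‖ ^ 2 = ‖(↑(orthogonalProjection R g) : L2)‖ ^ 2 +
        ‖(↑(orthogonalProjection Rᗮ g) : L2)‖ ^ 2 := by
      simpa using hsplit
    nlinarith [min_le_left A 1, min_le_right A 1, lt_min hA one_pos,
      sq_nonneg ‖(↑(orthogonalProjection R g) : L2)‖,
      sq_nonneg ‖(↑(orthogonalProjection Rᗮ g) : L2)‖]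
  have hdense : ∀ g : L2, (∀ u : L2, (⟪T' u, g⟫ : ℂ) = 0) → g = 0 := by
    intro g hg
    have h0 : RCLike.re (⟪T' g, g⟫ : ℂ) = 0 := by rw [hg g]; simp
    rw [hre g] at h0
    have hza : ‖Θad g‖ = 0 := by
      nlinarith [sq_nonneg ‖Θad g‖, sq_nonneg ‖(↑(orthogonalProjection Rᗮ g) : L2)‖,
        norm_nonneg (Θad g)]
    have hzb : ‖(↑(orthogonalProjection Rᗮ g) : L2)‖ = 0 := by
      nlinarith [sq_nonneg ‖Θad g‖, sq_nonneg ‖(↑(orthogonalProjection Rᗮ g) : L2)‖,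
        norm_nonneg (↑(orthogonalProjection Rᗮ g) : L2)]
    have hmem : g ∈ R := by
      have hp0 : orthogonalProjection Rᗮ g = 0 := by
        apply Subtype.ext
        simpa using norm_eq_zero.mp hzb
      have := Submodule.orthogonalProjectionOnto_eq_zero_iff.mp hp0
      rwa [Submodule.orthogonal_orthogonal] at this
    obtain ⟨h, rfl⟩ := LinearMap.mem_range.mp hmem
    have hΘad0 : Θad (Θ h) = 0 := norm_eq_zero.mp hza
    have hin : (⟪Θ h, Θ h⟫ : ℂ) = 0 := by
      have h2 : (⟪Θad (Θ h), h⟫ : ℂ) = ⟪Θ h, Θ h⟫ := by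
        rw [hΘad]; exact ContinuousLinearMap.adjoint_inner_left Θ h (Θ h)
      rw [← h2, hΘad0, inner_zero_left]
    exact inner_self_eq_zero.mp hin
  obtain ⟨hker, hrange⟩ :=
    FrameDilationAux.ker_range_of_coercive T' (lt_min hA one_pos) hcoer hdense
  set T'e : L2 ≃L[ℂ] L2 := ContinuousLinearEquiv.ofBijective T' hker hrange with hT'e
  -- the space K and the map U'
  set pe := WithLp.prodContinuousLinearEquiv 2 ℂ H ↥Rᗮ with hpe
  set U' : WithLp 2 (H × ↥Rᗮ) →L[ℂ] L2 :=
    (Θ.comp (ContinuousLinearMap.fst ℂ H ↥Rᗮ) +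
      Rᗮ.subtypeL.comp (ContinuousLinearMap.snd ℂ H ↥Rᗮ)).comp
      (pe : WithLp 2 (H × ↥Rᗮ) →L[ℂ] (H × ↥Rᗮ)) with hU'
  have hU'app : ∀ w : WithLp 2 (H × ↥Rᗮ), U' w = Θ (pe w).1 + ↑(pe w).2 := fun w => rfl
  have hU'inj0 : ∀ w : WithLp 2 (H × ↥Rᗮ), U' w = 0 → w = 0 := by
    intro w hw
    rw [hU'app] at hw
    have h1 : Θ (pe w).1 = -↑(pe w).2 := eq_neg_of_add_eq_zero_left hw
    have hmem : Θ (pe w).1 ∈ R ⊓ Rᗮ :=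
      ⟨LinearMap.mem_range_self _ _, by rw [h1]; exact neg_mem (pe w).2.2⟩
    rw [(Submodule.orthogonal_disjoint R).eq_bot] at hmem
    have hθ0 : Θ (pe w).1 = 0 := hmem
    have hfst : (pe w).1 = 0 := hΘinj (by rw [hθ0, map_zero])
    have hsnd : (pe w).2 = 0 := by
      apply Subtype.ext
      have := h1
      rw [hθ0] at this
      simpa using this.symm
    have : pe w = 0 := Prod.ext hfst hsnd
    rwa [ContinuousLinearEquiv.map_eq_zero_iff] at this
  have hU'ker : LinearMap.ker (U' : WithLp 2 (H × ↥Rᗮ) →ₗ[ℂ] L2) = ⊥ := by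
    apply LinearMap.ker_eq_bot_of_injective
    intro a b hab
    have := hU'inj0 (a - b) (by rw [map_sub]; exact sub_eq_zero.mpr hab)
    rwa [sub_eq_zero] at this
  have hU'range : LinearMap.range (U' : WithLp 2 (H × ↥Rᗮ) →ₗ[ℂ] L2) = ⊤ := by
    rw [LinearMap.range_eq_top]
    intro f
    obtain ⟨h, hh⟩ := LinearMap.mem_range.mp (orthogonalProjection R f).2
    refine ⟨pe.symm (h, orthogonalProjection Rᗮ f), ?_⟩
    change U' (pe.symm (h, orthogonalProjection Rᗮ f)) = f
    rw [hU'app, pe.apply_symm_apply]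
    show Θ h + ↑(orthogonalProjection Rᗮ f) = f
    rw [show Θ h = _ from hh]; exact R.starProjection_add_starProjection_orthogonal f
  set U'e : WithLp 2 (H × ↥Rᗮ) ≃L[ℂ] L2 :=
    ContinuousLinearEquiv.ofBijective U' hU'ker hU'range with hU'e
  -- separability
  haveI : SeparableSpace L2 :=
    FrameDilationAux.separableSpace_of_span _
      (Set.countable_range ⇑(default : HilbertBasis ℕ ℂ L2))
      (default : HilbertBasis ℕ ℂ L2).dense_span
  haveI : SecondCountableTopology H := UniformSpace.secondCountable_of_separable H
  haveI : SecondCountableTopology L2 := UniformSpace.secondCountable_of_separable L2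
  haveI : SecondCountableTopology (WithLp 2 (H × ↥Rᗮ)) :=
    inferInstance
  haveI : SeparableSpace (WithLp 2 (H × ↥Rᗮ)) := inferInstance
  have hKfd : ¬ FiniteDimensional ℂ (WithLp 2 (H × ↥Rᗮ)) := fun hfd =>
    FrameDilationAux.l2_not_fd (Module.Finite.equiv U'e.toLinearEquiv)
  obtain ⟨e⟩ := FrameDilationAux.exists_hilbertBasis_nat (WithLp 2 (H × ↥Rᗮ)) hKfd
  -- the isometry V
  let Vl : H →ₗ[ℂ] WithLp 2 (H × ↥Rᗮ) :=
    ((pe.symm : (H × ↥Rᗮ) →L[ℂ] WithLp 2 (H × ↥Rᗮ)) : (H × ↥Rᗮ) →ₗ[ℂ] WithLp 2 (H × ↥Rᗮ)).comp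
      (LinearMap.inl ℂ H ↥Rᗮ)
  have hVapp : ∀ h : H, Vl h = pe.symm (h, 0) := fun h => rfl
  let V : H →ₗᵢ[ℂ] WithLp 2 (H × ↥Rᗮ) := ⟨Vl, fun h => by
    have hc1 : (pe.symm ((h : H), (0 : ↥Rᗮ))).fst = h := rfl
    have hc2 : (pe.symm ((h : H), (0 : ↥Rᗮ))).snd = 0 := rfl
    have h1 : ‖Vl h‖ ^ 2 = ‖h‖ ^ 2 := by
      rw [hVapp, WithLp.prod_norm_sq_eq_of_L2, hc1, hc2]
      simp
    have hn := congrArg Real.sqrt h1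
    rwa [Real.sqrt_sq (norm_nonneg _), Real.sqrt_sq (norm_nonneg _)] at hn⟩
  -- the Riesz basis operator T
  refine ⟨WithLp 2 (H × ↥Rᗮ), inferInstance, inferInstance, inferInstance, V, e,
    e.repr.toContinuousLinearEquiv.trans (T'e.trans U'e.symm), fun n => ?_⟩
  have h1 : (e.repr.toContinuousLinearEquiv.trans (T'e.trans U'e.symm)) (e n) =
      U'e.symm (T'e (lp.single 2 n 1)) := by
    simp only [ContinuousLinearEquiv.trans_apply,
      LinearIsometryEquiv.coe_toContinuousLinearEquiv]
    rw [e.repr_self]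
  have h2 : T'e (lp.single 2 n 1) =
      Θ (x n) + ↑(orthogonalProjection Rᗮ (lp.single 2 n 1)) := by
    show T' _ = _
    rw [hT'app, hadj_single]
  have h3 : U'e (pe.symm (x n, orthogonalProjection Rᗮ (lp.single 2 n 1))) =
      Θ (x n) + ↑(orthogonalProjection Rᗮ (lp.single 2 n 1)) := by
    show U' _ = _
    rw [hU'app, pe.apply_symm_apply]
  have h4 : (e.repr.toContinuousLinearEquiv.trans (T'e.trans U'e.symm)) (e n) =
      pe.symm (x n, orthogonalProjection Rᗮ (lp.single 2 n 1)) := by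
    rw [h1, h2, ← h3, ContinuousLinearEquiv.symm_apply_apply]
  rw [h4]
  apply ext_inner_left ℂ
  intro v
  rw [ContinuousLinearMap.adjoint_inner_right]
  have hVc : V.toContinuousLinearMap v = pe.symm (v, 0) := rfl
  rw [hVc, WithLp.prod_inner_apply]
  have c1 : (WithLp.ofLp (pe.symm ((v : H), (0 : ↥Rᗮ)))).1 = v := rfl
  have c2 : (WithLp.ofLp (pe.symm ((v : H), (0 : ↥Rᗮ)))).2 = 0 := rfl
  have d1 : (WithLp.ofLp (pe.symm (x n, orthogonalProjection Rᗮ (lp.single 2 n 1)))).1 = x n := rfl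
  rw [c1, c2, d1]
  simp

end FrameDilationAux

/-- **Dilation characterization of frames** (Han–Larson).
A sequence `(xₙ)` in a complex Hilbert space `H` is a frame if and only if
there exist a complex Hilbert space `K`, a linear isometry `V : H → K` and a
Riesz basis `(vₙ) = (T eₙ)` of `K` (with `(eₙ)` an orthonormal basis of `K` and
`T` an invertible bounded operator on `K`) such that `xₙ = V* vₙ` for all `n`. -/
theorem frame_iff_riesz_basis_dilation
    {H : Type u} [NormedAddCommGroup H] [InnerProductSpace ℂ H] [CompleteSpace H]
    (x : ℕ → H) :
    IsFrame x ↔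
      ∃ (K : Type u) (_ : NormedAddCommGroup K) (_ : InnerProductSpace ℂ K)
        (_ : CompleteSpace K) (V : H →ₗᵢ[ℂ] K) (e : HilbertBasis ℕ ℂ K) (T : K ≃L[ℂ] K),
        ∀ n : ℕ, (ContinuousLinearMap.adjoint V.toContinuousLinearMap) (T (e n)) = x n :=
  ⟨FrameDilationAux.forward_dir x, FrameDilationAux.reverse_dir x⟩

end FrameDilationAuxSection
end

section
/- Let Ω be a σ-compact, locally compact Hausdorff space, μ a positive Radon measure on Ω with support equal to Ω, and H a separable complex Hilbert space. Let F : Ω → H be an (Ω,μ)-frame for H and let G : Ω → H be a Bessel map that is a dual of F. Suppose there exist a Hilbert space H₀ and an (Ω,μ)-frame F₀ for H₀ such that, with M := V_{F₀}(H₀) ⊆ L²(Ω,μ), one has V_F(H) ⊆ M and V_G(H) ⊆ M. Then there exist a Hilbert space K, a linear isometry W : H → K, and an (Ω,μ)-frame F̃ : Ω → K for K such that W*(F̃(ω)) = F(ω) and W*(S_{F̃}⁻¹ F̃(ω)) = G(ω) for all ω ∈ Ω, and V_{F̃}(K) = M, where S_{F̃} is the frame operator of F̃ and W* is the adjoint of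 W. -/
open MeasureTheory
open scoped ENNReal

universe u v

noncomputable section

/-- A weakly continuous map `F : Ω → H` is an `(Ω,μ)`-frame for the Hilbert space `H`:
there are constants `0 < C₁ ≤ C₂` with
`C₁‖x‖² ≤ ∫_Ω |⟨x, F ω⟩|² dμ ≤ C₂‖x‖²` for all `x ∈ H`. -/
def IsContinuousFrame {Ω : Type*} [TopologicalSpace Ω] [MeasurableSpace Ω]
    (μ : Measure Ω) {H : Type*} [NormedAddCommGroup H] [InnerProductSpace ℂ H]
    (F : Ω → H) : Prop :=
  (∀ x : H, Continuous fun ω => (inner ℂ x (F ω) : ℂ)) ∧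
  ∃ C₁ C₂ : ℝ, 0 < C₁ ∧ C₁ ≤ C₂ ∧ ∀ x : H,
    Integrable (fun ω => ‖(inner ℂ x (F ω) : ℂ)‖ ^ 2) μ ∧
    C₁ * ‖x‖ ^ 2 ≤ ∫ ω, ‖(inner ℂ x (F ω) : ℂ)‖ ^ 2 ∂μ ∧
    (∫ ω, ‖(inner ℂ x (F ω) : ℂ)‖ ^ 2 ∂μ) ≤ C₂ * ‖x‖ ^ 2



set_option maxHeartbeats 1000000 in
set_option synthInstance.maxHeartbeats 400000 in
private lemma aux_sqrt {E : Type*} [NormedAddCommGroup E] [InnerProductSpace ℂ E]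
    [CompleteSpace E] (S : E →L[ℂ] E) (hpos : (0 : E →L[ℂ] E) ≤ S)
    (hbij : Function.Bijective S) :
    ∃ R Rinv : E →L[ℂ] E, (∀ a b : E, (inner ℂ (R a) b : ℂ) = inner ℂ a (R b)) ∧
      (∀ y, R (R y) = S y) ∧ (∀ y, Rinv (R y) = y) ∧ (∀ y, R (Rinv y) = y) ∧
      (∀ a b : E, (inner ℂ (Rinv a) b : ℂ) = inner ℂ a (Rinv b)) := by
  have hker : S.ker = ⊥ := by
    rw [LinearMap.ker_eq_bot]; exact hbij.1
  have hrange : S.range = ⊤ := LinearMap.range_eq_top.mpr hbij.2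
  set eS := ContinuousLinearEquiv.ofBijective S hker hrange with heS
  set Sinv : E →L[ℂ] E := (eS.symm : E →L[ℂ] E) with hSinv
  have hi₁ : ∀ y, S (Sinv y) = y := fun y => by
    have := eS.apply_symm_apply y
    simpa [hSinv, heS] using this
  have hi₂ : ∀ y, Sinv (S y) = y := fun y => by
    have := eS.symm_apply_apply y
    simpa [hSinv, heS] using this
  set R : E →L[ℂ] E := CFC.sqrt S with hRdef
  have hRmul : R * R = S := CFC.sqrt_mul_sqrt_self S hpos
  have hRpos : (0 : E →L[ℂ] E) ≤ R := CFC.sqrt_nonneg S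
  have hRsa : IsSelfAdjoint R := ((ContinuousLinearMap.nonneg_iff_isPositive R).mp hRpos).isSelfAdjoint
  have hRadj : ContinuousLinearMap.adjoint R = R := ContinuousLinearMap.isSelfAdjoint_iff'.mp hRsa
  have hRsym : ∀ a b : E, (inner ℂ (R a) b : ℂ) = inner ℂ a (R b) := by
    intro a b
    conv_lhs => rw [← hRadj]
    exact ContinuousLinearMap.adjoint_inner_left R b a
  have hRRapp : ∀ y : E, R (R y) = S y := by
    intro y
    have h1 : (R * R) y = S y := by rw [hRmul]
    simpa [ContinuousLinearMap.mul_apply] using h1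
  have hcomm : ∀ y : E, R (S y) = S (R y) := by
    intro y
    rw [← hRRapp y, ← hRRapp (R y)]
  have hcommInv : ∀ y : E, Sinv (R y) = R (Sinv y) := by
    intro y
    conv_lhs => rw [← hi₁ y]
    rw [hcomm (Sinv y), hi₂]
  refine ⟨R, Sinv.comp R, hRsym, hRRapp, ?_, ?_, ?_⟩
  · intro y
    show Sinv (R (R y)) = y
    rw [hRRapp, hi₂]
  · intro y
    show R (Sinv (R y)) = y
    rw [hcommInv y, hRRapp, hi₁]
  · intro a b
    have hRinvR : ∀ y : E, R (Sinv (R y)) = y := by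
      intro y
      rw [hcommInv y, hRRapp, hi₁]
    show (inner ℂ (Sinv (R a)) b : ℂ) = inner ℂ a (Sinv (R b))
    conv_lhs => rw [← hRinvR b]
    rw [← hRsym, hRinvR]


set_option maxHeartbeats 6000000 in
set_option synthInstance.maxHeartbeats 1000000 in

private lemma aux_cont_eq_of_ae_eq {Ω : Type*} [TopologicalSpace Ω] [MeasurableSpace Ω]
    {μ : Measure Ω} (h_supp : ∀ U : Set Ω, IsOpen U → U.Nonempty → 0 < μ U)
    {f g : Ω → ℂ} (hf : Continuous f) (hg : Continuous g) (h : f =ᵐ[μ] g) : f = g := by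
  by_contra hne
  rw [funext_iff] at hne
  push_neg at hne
  obtain ⟨ω, hω⟩ := hne
  have hU : IsOpen {a | f a ≠ g a} := isOpen_ne_fun hf hg
  have h1 : 0 < μ {a | f a ≠ g a} := h_supp _ hU ⟨ω, hω⟩
  have h2 : μ {a | f a ≠ g a} = 0 := by
    simpa [Filter.EventuallyEq, ae_iff] using h
  simp [h2] at h1

private lemma aux_norm_sq {Ω : Type*} [MeasurableSpace Ω] {μ : Measure Ω} (f : Lp ℂ 2 μ)
    {g : Ω → ℂ} (hg : (f : Ω → ℂ) =ᵐ[μ] g) : ‖f‖ ^ 2 = ∫ ω, ‖g ω‖ ^ 2 ∂μ := by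
  have h1 : (‖f‖ ^ 2 : ℝ) = RCLike.re (inner ℂ f f : ℂ) := (inner_self_eq_norm_sq f).symm
  rw [h1, MeasureTheory.L2.inner_def, ← integral_re (MeasureTheory.L2.integrable_inner f f)]
  refine integral_congr_ae ?_
  filter_upwards [hg] with ω hω
  simp only [hω.symm, RCLike.inner_apply]
  rw [Complex.sq_norm, Complex.normSq_apply]
  show (_ * _ : ℂ).re = _
  rw [Complex.mul_re, Complex.conj_re, Complex.conj_im]
  ring

private lemma aux_inner_L2 {Ω : Type*} [MeasurableSpace Ω] {μ : Measure Ω} (f g : Lp ℂ 2 μ)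
    {f' g' : Ω → ℂ} (hf : (f : Ω → ℂ) =ᵐ[μ] f') (hg : (g : Ω → ℂ) =ᵐ[μ] g') :
    (inner ℂ f g : ℂ) = ∫ ω, (starRingEnd ℂ) (f' ω) * g' ω ∂μ := by
  rw [MeasureTheory.L2.inner_def]
  refine integral_congr_ae ?_
  filter_upwards [hf, hg] with ω h1 h2
  simp [RCLike.inner_apply, h1, h2, mul_comm]

private lemma aux_coercive_bijective {E : Type*} [NormedAddCommGroup E] [InnerProductSpace ℂ E]
    [CompleteSpace E] (T : E →L[ℂ] E) {c : ℝ} (hc : 0 < c)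
    (h : ∀ x, c * ‖x‖ ^ 2 ≤ RCLike.re (inner ℂ (T x) x : ℂ)) : Function.Bijective T := by
  have hb : ∀ x, ‖x‖ ≤ c⁻¹ * ‖T x‖ := by
    intro x
    have h1 : c * ‖x‖ ^ 2 ≤ ‖T x‖ * ‖x‖ := le_trans (h x)
      (le_trans (RCLike.re_le_norm _) (norm_inner_le_norm _ _))
    rcases eq_or_ne x 0 with rfl | hx
    · simp
    have hx' : 0 < ‖x‖ := norm_pos_iff.mpr hx
    rw [← mul_le_mul_iff_left₀ hx', inv_mul_eq_div, div_mul_eq_mul_div, le_div_iff₀ hc]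
    nlinarith
  have hanti : AntilipschitzWith ⟨c⁻¹, (inv_nonneg).mpr hc.le⟩ T :=
    T.antilipschitz_of_bound (by exact_mod_cast hb)
  have hinj : Function.Injective T := hanti.injective
  have hclosed : IsClosed (Set.range T) := hanti.isClosed_range T.uniformContinuous
  have hrange : T.range = ⊤ := by
    have hcl : IsClosed (T.range : Set E) := by
      have : (T.range : Set E) = Set.range T := by
        ext y; simp [LinearMap.mem_range]
      rw [this]; exact hclosed
    haveI : CompleteSpace T.range := hcl.completeSpace_coe
    rw [← Submodule.orthogonal_eq_bot_iff]
    rw [Submodule.eq_bot_iff]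
    intro y hy
    have h0 : (inner ℂ (T y) y : ℂ) = 0 :=
      (Submodule.mem_orthogonal _ y).mp hy (T y) (LinearMap.mem_range_self _ y)
    have h3 := h y
    rw [h0] at h3
    simp at h3
    have h4 : ‖y‖ ^ 2 ≤ 0 := by nlinarith
    have h5 : ‖y‖ = 0 := by nlinarith [norm_nonneg y, sq_nonneg ‖y‖]
    simpa using h5
  exact ⟨hinj, LinearMap.range_eq_top.mp hrange⟩


set_option maxHeartbeats 6000000 in
set_option synthInstance.maxHeartbeats 2000000 in
/-- **Dilation theorem for continuous dual frame pairs** (Gabardo–Han).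
Let `Ω` be a σ-compact locally compact Hausdorff space with a positive Radon measure `μ`
of full support, and `H` a separable complex Hilbert space.  Let `F` be an `(Ω,μ)`-frame
for `H` with analysis operator `V_F`, and let `G` be a Bessel dual of `F` with analysis
operator `V_G`.  Suppose both ranges `V_F(H)` and `V_G(H)` are contained in the range
`M = V_{F₀}(H₀)` of the analysis operator of some `(Ω,μ)`-frame `F₀`.  Then there exist a
Hilbert space `K`, an isometry `W : H → K`, and an `(Ω,μ)`-frame `F̃` for `K`, with
analysis operator `Ṽ` and frame operator `S̃ = Ṽ* Ṽ` (with inverse `S̃⁻¹`), such that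
`W* F̃(ω) = F(ω)` and `W*(S̃⁻¹ F̃(ω)) = G(ω)` for all `ω`, and `Ṽ(K) = M`. -/
theorem continuous_dual_pair_dilation
    {Ω : Type v} [TopologicalSpace Ω] [T2Space Ω] [LocallyCompactSpace Ω]
    [SigmaCompactSpace Ω] [MeasurableSpace Ω] [BorelSpace Ω]
    (μ : Measure Ω) [IsFiniteMeasureOnCompacts μ] [μ.Regular]
    (h_supp : ∀ U : Set Ω, IsOpen U → U.Nonempty → 0 < μ U)
    {H : Type u} [NormedAddCommGroup H] [InnerProductSpace ℂ H] [CompleteSpace H]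
    [TopologicalSpace.SeparableSpace H]
    (F G : Ω → H)
    (hF : IsContinuousFrame μ F)
    -- `G` is weakly continuous and Bessel
    (hGw : ∀ x : H, Continuous fun ω => (inner ℂ x (G ω) : ℂ))
    (hG_Bessel : ∃ C : ℝ, 0 < C ∧ ∀ x : H,
      Integrable (fun ω => ‖(inner ℂ x (G ω) : ℂ)‖ ^ 2) μ ∧
      (∫ ω, ‖(inner ℂ x (G ω) : ℂ)‖ ^ 2 ∂μ) ≤ C * ‖x‖ ^ 2)
    -- `G` is a dual of `F`:  ⟨x, y⟩ = ∫ ⟨x, F ω⟩ ⟨G ω, y⟩ dμ(ω)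
    (h_dual : ∀ x y : H,
      (inner ℂ y x : ℂ) = ∫ ω, (inner ℂ (F ω) x : ℂ) * (inner ℂ y (G ω) : ℂ) ∂μ)
    -- analysis operators of `F` and `G`
    (VF VG : H →L[ℂ] Lp ℂ 2 μ)
    (hVF : ∀ x : H, (VF x : Ω → ℂ) =ᵐ[μ] fun ω => (inner ℂ (F ω) x : ℂ))
    (hVG : ∀ x : H, (VG x : Ω → ℂ) =ᵐ[μ] fun ω => (inner ℂ (G ω) x : ℂ))
    -- an `(Ω,μ)`-frame `F₀` for some Hilbert space `H₀`, whose analysis operator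
    -- has range `M` containing the ranges of `V_F` and `V_G`
    {H₀ : Type u} [NormedAddCommGroup H₀] [InnerProductSpace ℂ H₀] [CompleteSpace H₀]
    (F₀ : Ω → H₀) (hF₀ : IsContinuousFrame μ F₀)
    (VF₀ : H₀ →L[ℂ] Lp ℂ 2 μ)
    (hVF₀ : ∀ x : H₀, (VF₀ x : Ω → ℂ) =ᵐ[μ] fun ω => (inner ℂ (F₀ ω) x : ℂ))
    (hMF : Set.range VF ⊆ Set.range VF₀)
    (hMG : Set.range VG ⊆ Set.range VF₀) :
    ∃ (K : Type u) (_ : NormedAddCommGroup K) (_ : InnerProductSpace ℂ K)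
      (_ : CompleteSpace K)
      (W : H →ₗᵢ[ℂ] K) (Ft : Ω → K) (Vt : K →L[ℂ] Lp ℂ 2 μ) (Sinv : K →L[ℂ] K),
      IsContinuousFrame μ Ft ∧
      (∀ k : K, (Vt k : Ω → ℂ) =ᵐ[μ] fun ω => (inner ℂ (Ft ω) k : ℂ)) ∧
      -- `Sinv` is the inverse of the frame operator `S̃ = Ṽ* Ṽ` of `F̃`
      ((ContinuousLinearMap.adjoint Vt).comp Vt).comp Sinv = ContinuousLinearMap.id ℂ K ∧
      Sinv.comp ((ContinuousLinearMap.adjoint Vt).comp Vt) = ContinuousLinearMap.id ℂ K ∧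
      (∀ ω : Ω, (ContinuousLinearMap.adjoint W.toContinuousLinearMap) (Ft ω) = F ω) ∧
      (∀ ω : Ω,
        (ContinuousLinearMap.adjoint W.toContinuousLinearMap) (Sinv (Ft ω)) = G ω) ∧
      Set.range Vt = Set.range VF₀ := by
  classical
  obtain ⟨hF₀w, C₁, C₂, hC₁, hC₁₂, hF₀b⟩ := hF₀
  set J := VF₀ with hJdef
  -- ‖J x‖² equals the frame integral
  have hJnorm : ∀ x : H₀, ‖J x‖ ^ 2 = ∫ ω, ‖(inner ℂ x (F₀ ω) : ℂ)‖ ^ 2 ∂μ := by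
    intro x
    rw [aux_norm_sq (J x) (hVF₀ x)]
    refine integral_congr_ae (Filter.Eventually.of_forall fun ω => ?_)
    simp only []
    rw [norm_inner_symm]
  -- the operator S₀ = J* J is coercive, hence bijective
  set S₀ : H₀ →L[ℂ] H₀ := (ContinuousLinearMap.adjoint J).comp J with hS₀def
  have hS₀coer : ∀ x : H₀, C₁ * ‖x‖ ^ 2 ≤ RCLike.re (inner ℂ (S₀ x) x : ℂ) := by
    intro x
    have h1 : (inner ℂ (S₀ x) x : ℂ) = inner ℂ (J x) (J x) := by
      rw [hS₀def, ContinuousLinearMap.comp_apply]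
      exact ContinuousLinearMap.adjoint_inner_left J x (J x)
    rw [h1, inner_self_eq_norm_sq, hJnorm]
    exact (hF₀b x).2.1
  have hS₀bij : Function.Bijective S₀ := aux_coercive_bijective S₀ hC₁ hS₀coer
  have hS₀ker : S₀.ker = ⊥ := by
    rw [LinearMap.ker_eq_bot]; exact hS₀bij.1
  have hS₀range : S₀.range = ⊤ := LinearMap.range_eq_top.mpr hS₀bij.2
  set eS₀ := ContinuousLinearEquiv.ofBijective S₀ hS₀ker hS₀range with heS₀
  set S₀inv : H₀ →L[ℂ] H₀ := (eS₀.symm : H₀ →L[ℂ] H₀) with hS₀inv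
  have hS₀i₁ : ∀ y, S₀ (S₀inv y) = y := fun y => by
    have := eS₀.apply_symm_apply y
    simpa [hS₀inv, heS₀] using this
  have hS₀i₂ : ∀ y, S₀inv (S₀ y) = y := fun y => by
    have := eS₀.symm_apply_apply y
    simpa [hS₀inv, heS₀] using this
  -- the operators B, A', A
  set A' : H →L[ℂ] H₀ := (ContinuousLinearMap.adjoint J).comp VG with hA'def
  set B : H →L[ℂ] H₀ := S₀inv.comp ((ContinuousLinearMap.adjoint J).comp VF) with hBdef
  set A : H →L[ℂ] H₀ := S₀inv.comp A' with hAdef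
  have hJB : ∀ x : H, J (B x) = VF x := by
    intro x
    obtain ⟨z, hz⟩ := hMF (Set.mem_range_self x)
    have h1 : B x = S₀inv ((ContinuousLinearMap.adjoint J) (VF x)) := rfl
    rw [h1, ← hz]
    have h2 : (ContinuousLinearMap.adjoint J) (J z) = S₀ z := rfl
    rw [h2, hS₀i₂ z]
  have hJA : ∀ x : H, J (A x) = VG x := by
    intro x
    obtain ⟨z, hz⟩ := hMG (Set.mem_range_self x)
    have h1 : A x = S₀inv ((ContinuousLinearMap.adjoint J) (VG x)) := rfl
    rw [h1, ← hz]
    have h2 : (ContinuousLinearMap.adjoint J) (J z) = S₀ z := rfl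
    rw [h2, hS₀i₂ z]
  -- duality: ⟪VG y, VF x⟫ = ⟪y, x⟫
  have hdual_inner : ∀ x y : H, (inner ℂ (VG y) (VF x) : ℂ) = inner ℂ y x := by
    intro x y
    rw [aux_inner_L2 (VG y) (VF x) (hVG y) (hVF x), h_dual x y]
    refine integral_congr_ae (Filter.Eventually.of_forall fun ω => ?_)
    simp only []
    rw [inner_conj_symm, mul_comm]
  have hBA'inner : ∀ x y : H, (inner ℂ (B x) (A' y) : ℂ) = inner ℂ x y := by
    intro x y
    have h1 : (inner ℂ (B x) (A' y) : ℂ) = inner ℂ (J (B x)) (VG y) := by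
      rw [hA'def]
      simp only [ContinuousLinearMap.comp_apply]
      rw [ContinuousLinearMap.adjoint_inner_right]
    rw [h1, hJB, ← inner_conj_symm, hdual_inner x y, inner_conj_symm]
  have hadjBA' : ∀ y : H, (ContinuousLinearMap.adjoint B) (A' y) = y := by
    intro y
    refine ext_inner_right ℂ fun v => ?_
    rw [ContinuousLinearMap.adjoint_inner_left, ← inner_conj_symm, hBA'inner v y, inner_conj_symm]
  -- the positive invertible operator S'
  set Q : H₀ →L[ℂ] H₀ := ContinuousLinearMap.id ℂ H₀ - A'.comp (ContinuousLinearMap.adjoint B)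
    with hQdef
  set S' : H₀ →L[ℂ] H₀ :=
    B.comp (ContinuousLinearMap.adjoint B) + (ContinuousLinearMap.adjoint Q).comp Q with hS'def
  have hS're : ∀ x : H₀, RCLike.re (inner ℂ (S' x) x : ℂ) =
      ‖(ContinuousLinearMap.adjoint B) x‖ ^ 2 + ‖Q x‖ ^ 2 := by
    intro x
    have h1 : (inner ℂ (S' x) x : ℂ) = inner ℂ (B ((ContinuousLinearMap.adjoint B) x)) x
        + inner ℂ ((ContinuousLinearMap.adjoint Q) (Q x)) x := by
      rw [hS'def]
      simp [ContinuousLinearMap.add_apply, inner_add_left]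
    have h2 : (inner ℂ (B ((ContinuousLinearMap.adjoint B) x)) x : ℂ)
        = inner ℂ ((ContinuousLinearMap.adjoint B) x) ((ContinuousLinearMap.adjoint B) x) :=
      (ContinuousLinearMap.adjoint_inner_right B ((ContinuousLinearMap.adjoint B) x) x).symm
    have h3 : (inner ℂ ((ContinuousLinearMap.adjoint Q) (Q x)) x : ℂ) = inner ℂ (Q x) (Q x) :=
      ContinuousLinearMap.adjoint_inner_left Q x (Q x)
    rw [h1, h2, h3, map_add, inner_self_eq_norm_sq, inner_self_eq_norm_sq]
  have hQsum : ∀ x : H₀, A' ((ContinuousLinearMap.adjoint B) x) + Q x = x := by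
    intro x
    simp [hQdef]
  set c' : ℝ := (2 * (‖A'‖ ^ 2 + 1))⁻¹ with hc'def
  have hc' : 0 < c' := by positivity
  have hS'coer : ∀ x : H₀, c' * ‖x‖ ^ 2 ≤ RCLike.re (inner ℂ (S' x) x : ℂ) := by
    intro x
    rw [hS're x]
    have h1 : ‖x‖ ≤ ‖A'‖ * ‖(ContinuousLinearMap.adjoint B) x‖ + ‖Q x‖ := by
      calc ‖x‖ = ‖A' ((ContinuousLinearMap.adjoint B) x) + Q x‖ := by rw [hQsum x]
        _ ≤ ‖A' ((ContinuousLinearMap.adjoint B) x)‖ + ‖Q x‖ := norm_add_le _ _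
        _ ≤ ‖A'‖ * ‖(ContinuousLinearMap.adjoint B) x‖ + ‖Q x‖ := by
            gcongr
            exact A'.le_opNorm _
    rw [hc'def, inv_mul_le_iff₀ (by positivity)]
    nlinarith [norm_nonneg x, norm_nonneg ((ContinuousLinearMap.adjoint B) x),
      norm_nonneg (Q x), norm_nonneg A',
      sq_nonneg (‖A'‖ * ‖(ContinuousLinearMap.adjoint B) x‖ - ‖Q x‖),
      mul_self_le_mul_self (norm_nonneg x) h1,
      sq_nonneg (‖A'‖ * ‖Q x‖), sq_nonneg ‖(ContinuousLinearMap.adjoint B) x‖]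
  have hS'bij : Function.Bijective S' := aux_coercive_bijective S' hc' hS'coer
  -- S' ∘ A' = B
  have hS'A' : ∀ x : H, S' (A' x) = B x := by
    intro x
    have hQA' : Q (A' x) = 0 := by
      simp [hQdef, hadjBA' x]
    rw [hS'def]
    simp only [ContinuousLinearMap.add_apply, ContinuousLinearMap.comp_apply, hQA', hadjBA' x,
      map_zero, add_zero]
  -- positivity of S'
  have hS'inner : ∀ x : H₀, (inner ℂ (S' x) x : ℂ)
      = (RCLike.ofReal (‖(ContinuousLinearMap.adjoint B) x‖ ^ 2 + ‖Q x‖ ^ 2) : ℂ) := by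
    intro x
    have h1 : (inner ℂ (S' x) x : ℂ) = inner ℂ (B ((ContinuousLinearMap.adjoint B) x)) x
        + inner ℂ ((ContinuousLinearMap.adjoint Q) (Q x)) x := by
      rw [hS'def]
      simp [ContinuousLinearMap.add_apply, inner_add_left]
    have h2 : (inner ℂ (B ((ContinuousLinearMap.adjoint B) x)) x : ℂ)
        = inner ℂ ((ContinuousLinearMap.adjoint B) x) ((ContinuousLinearMap.adjoint B) x) :=
      (ContinuousLinearMap.adjoint_inner_right B ((ContinuousLinearMap.adjoint B) x) x).symm
    have h3 : (inner ℂ ((ContinuousLinearMap.adjoint Q) (Q x)) x : ℂ) = inner ℂ (Q x) (Q x) :=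
      ContinuousLinearMap.adjoint_inner_left Q x (Q x)
    rw [h1, h2, h3, inner_self_eq_norm_sq_to_K, inner_self_eq_norm_sq_to_K,
      ← RCLike.ofReal_pow, ← RCLike.ofReal_pow, ← RCLike.ofReal_add]
  have hS'pos : (0 : H₀ →L[ℂ] H₀) ≤ S' := by
    rw [ContinuousLinearMap.nonneg_iff_isPositive]
    rw [ContinuousLinearMap.isPositive_iff_complex]
    intro x
    rw [hS'inner x]
    constructor
    · rw [RCLike.ofReal_re]
      exact_mod_cast rfl
    · rw [RCLike.ofReal_re]
      positivity
  -- the square root R of S'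
  obtain ⟨R, Rinv, hRsym, hRRapp, hRinvR, hRRinv, hRinvsym⟩ := aux_sqrt S' hS'pos hS'bij
  have hRadj : ContinuousLinearMap.adjoint R = R := by
    ext a
    refine ext_inner_right ℂ fun b => ?_
    rw [ContinuousLinearMap.adjoint_inner_left]
    exact (hRsym a b).symm
  -- symmetry of S₀inv
  have hS₀sym : ∀ a b : H₀, (inner ℂ (S₀ a) b : ℂ) = inner ℂ a (S₀ b) := by
    intro a b
    have h1 : (inner ℂ (S₀ a) b : ℂ) = inner ℂ (J a) (J b) := by
      rw [hS₀def, ContinuousLinearMap.comp_apply]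
      exact ContinuousLinearMap.adjoint_inner_left J b (J a)
    have h2 : (inner ℂ a (S₀ b) : ℂ) = inner ℂ (J a) (J b) := by
      rw [hS₀def, ContinuousLinearMap.comp_apply]
      exact ContinuousLinearMap.adjoint_inner_right J a (J b)
    rw [h1, h2]
  have hS₀invsym : ∀ a b : H₀, (inner ℂ (S₀inv a) b : ℂ) = inner ℂ a (S₀inv b) := by
    intro a b
    conv_lhs => rw [← hS₀i₁ b]
    rw [← hS₀sym, hS₀i₁]
  -- the isometry W
  set W0 : H →L[ℂ] H₀ := Rinv.comp B with hW0def
  have hW0b : ∀ x : H, W0 x = Rinv (B x) := fun x => rfl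
  have hW0a : ∀ x : H, W0 x = R (A' x) := by
    intro x
    rw [hW0b, ← hS'A' x, ← hRRapp (A' x), hRinvR]
  have hRW0 : ∀ v : H, R (W0 v) = B v := by
    intro v
    rw [hW0b, hRRinv]
  have hWinner : ∀ x y : H, (inner ℂ (W0 x) (W0 y) : ℂ) = inner ℂ x y := by
    intro x y
    calc (inner ℂ (W0 x) (W0 y) : ℂ) = inner ℂ (Rinv (B x)) (R (A' y)) := by rw [hW0b x, hW0a y]
      _ = inner ℂ (R (Rinv (B x))) (A' y) := (hRsym (Rinv (B x)) (A' y)).symm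
      _ = inner ℂ (B x) (A' y) := by rw [hRRinv]
      _ = inner ℂ x y := hBA'inner x y
  have hWnorm : ∀ x : H, ‖W0 x‖ = ‖x‖ := by
    intro x
    have h2 : ‖W0 x‖ ^ 2 = ‖x‖ ^ 2 := by
      rw [← inner_self_eq_norm_sq (𝕜 := ℂ) (W0 x), ← inner_self_eq_norm_sq (𝕜 := ℂ) x,
        hWinner x x]
    have h3 := congrArg Real.sqrt h2
    rwa [Real.sqrt_sq (norm_nonneg _), Real.sqrt_sq (norm_nonneg _)] at h3
  set W : H →ₗᵢ[ℂ] H₀ := ⟨(W0 : H →ₗ[ℂ] H₀), hWnorm⟩ with hWdef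
  have hWCLM : W.toContinuousLinearMap = W0 := by
    ext x
    rfl
  -- the key pointwise identity
  have hkey : ∀ (C : H →L[ℂ] H₀) (D : Ω → H) (VD : H →L[ℂ] Lp ℂ 2 μ),
      (∀ x : H, Continuous fun ω => (inner ℂ x (D ω) : ℂ)) →
      (∀ x : H, (VD x : Ω → ℂ) =ᵐ[μ] fun ω => (inner ℂ (D ω) x : ℂ)) →
      (∀ x : H, J (C x) = VD x) →
      ∀ (ω : Ω) (x : H), (inner ℂ (F₀ ω) (C x) : ℂ) = inner ℂ (D ω) x := by
    intro C D VD hDw hVD hJC ω x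
    have hfc : Continuous fun ω => (inner ℂ (F₀ ω) (C x) : ℂ) := by
      have h1 : (fun ω => (inner ℂ (F₀ ω) (C x) : ℂ))
          = fun ω => (starRingEnd ℂ) (inner ℂ (C x) (F₀ ω) : ℂ) := by
        funext ω
        rw [inner_conj_symm]
      rw [h1]
      exact continuous_star.comp (hF₀w (C x))
    have hgc : Continuous fun ω => (inner ℂ (D ω) x : ℂ) := by
      have h1 : (fun ω => (inner ℂ (D ω) x : ℂ))
          = fun ω => (starRingEnd ℂ) (inner ℂ x (D ω) : ℂ) := by
        funext ω
        rw [inner_conj_symm]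
      rw [h1]
      exact continuous_star.comp (hDw x)
    have hae : (fun ω => (inner ℂ (F₀ ω) (C x) : ℂ)) =ᵐ[μ] fun ω => (inner ℂ (D ω) x : ℂ) := by
      refine (hVF₀ (C x)).symm.trans ?_
      rw [hJC x]
      exact hVD x
    exact congrFun (aux_cont_eq_of_ae_eq h_supp hfc hgc hae) ω
  have hptF : ∀ (ω : Ω) (x : H), (inner ℂ (F₀ ω) (B x) : ℂ) = inner ℂ (F ω) x :=
    hkey B F VF hF.1 hVF hJB
  have hptG : ∀ (ω : Ω) (x : H), (inner ℂ (F₀ ω) (A x) : ℂ) = inner ℂ (G ω) x :=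
    hkey A G VG hGw hVG hJA
  -- the dilated frame data
  set Ft : Ω → H₀ := fun ω => R (F₀ ω) with hFtdef
  set Vt : H₀ →L[ℂ] Lp ℂ 2 μ := J.comp R with hVtdef
  set Sinv : H₀ →L[ℂ] H₀ := Rinv.comp (S₀inv.comp Rinv) with hSinvdef
  have hJadjJ : ∀ y : H₀, (ContinuousLinearMap.adjoint J) (J y) = S₀ y := fun y => rfl
  have hFtinner : ∀ (x : H₀) (ω : Ω), (inner ℂ x (Ft ω) : ℂ) = inner ℂ (R x) (F₀ ω) := by
    intro x ω
    rw [hFtdef]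
    exact (hRsym x (F₀ ω)).symm
  refine ⟨H₀, ‹_›, ‹_›, ‹_›, W, Ft, Vt, Sinv, ?_, ?_, ?_, ?_, ?_, ?_, ?_⟩
  · -- Ft is a continuous frame
    constructor
    · intro x
      have h1 : (fun ω => (inner ℂ x (Ft ω) : ℂ)) = fun ω => (inner ℂ (R x) (F₀ ω) : ℂ) :=
        funext fun ω => hFtinner x ω
      rw [h1]
      exact hF₀w (R x)
    · refine ⟨C₁ * (‖Rinv‖ ^ 2 + 1)⁻¹, C₂ * (‖R‖ ^ 2 + 1), by positivity, ?_, ?_⟩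
      · have h1 : C₁ * (‖Rinv‖ ^ 2 + 1)⁻¹ ≤ C₁ := by
          rw [mul_inv_le_iff₀ (by positivity)]
          nlinarith [sq_nonneg ‖Rinv‖]
        have h2 : C₂ ≤ C₂ * (‖R‖ ^ 2 + 1) := by
          nlinarith [sq_nonneg ‖R‖, hC₁.le.trans hC₁₂]
        linarith
      · intro x
        have hfun : (fun ω => ‖(inner ℂ x (Ft ω) : ℂ)‖ ^ 2)
            = fun ω => ‖(inner ℂ (R x) (F₀ ω) : ℂ)‖ ^ 2 := by
          funext ω
          rw [hFtinner x ω]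
        have hint : (∫ ω, ‖(inner ℂ x (Ft ω) : ℂ)‖ ^ 2 ∂μ)
            = ∫ ω, ‖(inner ℂ (R x) (F₀ ω) : ℂ)‖ ^ 2 ∂μ := by rw [hfun]
        obtain ⟨hi, hl, hu⟩ := hF₀b (R x)
        refine ⟨by rw [hfun]; exact hi, ?_, ?_⟩
        · rw [hint]
          have h1 : ‖x‖ ≤ ‖Rinv‖ * ‖R x‖ := by
            calc ‖x‖ = ‖Rinv (R x)‖ := by rw [hRinvR x]
              _ ≤ ‖Rinv‖ * ‖R x‖ := Rinv.le_opNorm _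
          have h2 : C₁ * (‖Rinv‖ ^ 2 + 1)⁻¹ * ‖x‖ ^ 2 ≤ C₁ * ‖R x‖ ^ 2 := by
            rw [mul_assoc, mul_comm (‖Rinv‖ ^ 2 + 1)⁻¹, ← mul_assoc,
              mul_inv_le_iff₀ (by positivity)]
            have h3 : ‖x‖ ^ 2 ≤ (‖Rinv‖ ^ 2 + 1) * ‖R x‖ ^ 2 := by
              nlinarith [norm_nonneg x, norm_nonneg (R x), norm_nonneg Rinv,
                mul_self_le_mul_self (norm_nonneg x) h1, sq_nonneg ‖R x‖]
            nlinarith [hC₁.le]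
          exact h2.trans hl
        · rw [hint]
          have h1 : ‖R x‖ ≤ ‖R‖ * ‖x‖ := R.le_opNorm x
          have h2 : C₂ * ‖R x‖ ^ 2 ≤ C₂ * (‖R‖ ^ 2 + 1) * ‖x‖ ^ 2 := by
            have hC₂ : 0 ≤ C₂ := hC₁.le.trans hC₁₂
            nlinarith [norm_nonneg (R x), norm_nonneg x, norm_nonneg R,
              mul_self_le_mul_self (norm_nonneg (R x)) h1, sq_nonneg ‖x‖]
          exact hu.trans h2
  · -- Vt is the analysis operator of Ft
    intro k
    have h1 : (fun ω => (inner ℂ (F₀ ω) (R k) : ℂ)) = fun ω => (inner ℂ (Ft ω) k : ℂ) := by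
      funext ω
      rw [hFtdef]
      show (inner ℂ (F₀ ω) (R k) : ℂ) = inner ℂ (R (F₀ ω)) k
      exact (hRsym (F₀ ω) k).symm
    have h2 := hVF₀ (R k)
    rw [h1] at h2
    exact h2
  · -- frame operator identity 1
    ext x
    simp only [ContinuousLinearMap.comp_apply, ContinuousLinearMap.coe_comp',
      Function.comp_apply, ContinuousLinearMap.id_apply]
    rw [hVtdef, ContinuousLinearMap.adjoint_comp, hRadj]
    simp only [ContinuousLinearMap.comp_apply]
    rw [hSinvdef]
    simp only [ContinuousLinearMap.comp_apply]
    rw [hRRinv, hJadjJ, hS₀i₁, hRRinv]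
  · -- frame operator identity 2
    ext x
    simp only [ContinuousLinearMap.comp_apply, ContinuousLinearMap.coe_comp',
      Function.comp_apply, ContinuousLinearMap.id_apply]
    rw [hVtdef, ContinuousLinearMap.adjoint_comp, hRadj]
    simp only [ContinuousLinearMap.comp_apply]
    rw [hSinvdef]
    simp only [ContinuousLinearMap.comp_apply]
    rw [hJadjJ, hRinvR, hS₀i₂, hRinvR]
  · -- W* Ft = F
    intro ω
    rw [hWCLM]
    refine ext_inner_right ℂ fun v => ?_
    rw [ContinuousLinearMap.adjoint_inner_left, hFtdef]
    rw [hRsym (F₀ ω) (W0 v), hRW0 v]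
    exact hptF ω v
  · -- W* Sinv Ft = G
    intro ω
    rw [hWCLM]
    have h0 : Sinv (Ft ω) = Rinv (S₀inv (F₀ ω)) := by
      rw [hFtdef, hSinvdef]
      simp only [ContinuousLinearMap.comp_apply]
      rw [hRinvR]
    rw [h0]
    refine ext_inner_right ℂ fun v => ?_
    rw [ContinuousLinearMap.adjoint_inner_left]
    rw [hRinvsym (S₀inv (F₀ ω)) (W0 v)]
    have h1 : Rinv (W0 v) = A' v := by
      rw [hW0b, ← hS'A' v, ← hRRapp (A' v), hRinvR, hRinvR]
    rw [h1, hS₀invsym (F₀ ω) (A' v)]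
    have h2 : S₀inv (A' v) = A v := rfl
    rw [h2]
    exact hptG ω v
  · -- range of Vt
    ext f
    constructor
    · rintro ⟨k, rfl⟩
      exact ⟨R k, rfl⟩
    · rintro ⟨y, rfl⟩
      refine ⟨Rinv y, ?_⟩
      show J (R (Rinv y)) = J y
      rw [hRRinv]

end
end

section
/- Let (Ω, Σ) be a measurable space, X and Y complex Banach spaces, and E : Σ → B(X, Y) an operator-valued measure. Then there exist a complex Banach space Z, bounded linear operators S : Z → Y and T : X → Z, and a projection-valued probability measure F : Σ → B(Z) such that E(B) = S ∘ F(B) ∘ T for all B ∈ Σ. -/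
universe u v w

/-- An operator-valued measure on a measurable space `(Ω, Σ)`: a map `E` from sets to
bounded operators that is countably additive (in the strong, equivalently weak, operator
topology) on measurable sets. -/
def IsOperatorValuedMeasure {Ω : Type w} [MeasurableSpace Ω]
    {X Y : Type*} [NormedAddCommGroup X] [NormedSpace ℂ X]
    [NormedAddCommGroup Y] [NormedSpace ℂ Y]
    (E : Set Ω → (X →L[ℂ] Y)) : Prop :=
  ∀ B : ℕ → Set Ω, (∀ i, MeasurableSet (B i)) → Pairwise (Function.onFun Disjoint B) →
    ∀ x : X, HasSum (fun i : ℕ => E (B i) x) (E (⋃ i, B i) x)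

namespace OVMDil

open Filter Topology BoundedContinuousFunction

attribute [local instance] Classical.propDecidable

variable {Ω : Type w} [MeasurableSpace Ω]
variable {Y : Type v} [NormedAddCommGroup Y]

/-- countably additive vector-valued set function (on measurable sets). -/
def VM (μ : Set Ω → Y) : Prop :=
  ∀ B : ℕ → Set Ω, (∀ i, MeasurableSet (B i)) → Pairwise (Function.onFun Disjoint B) →
    HasSum (fun i : ℕ => μ (B i)) (μ (⋃ i, B i))

theorem VM.empty {μ : Set Ω → Y} (h : VM μ) : μ ∅ = 0 := by
  have h1 : HasSum (fun _ : ℕ => μ ∅) (μ (⋃ _ : ℕ, (∅ : Set Ω))) :=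
    h (fun _ => ∅) (fun _ => MeasurableSet.empty)
      (fun i j _ => by simp [Function.onFun])
  rw [Set.iUnion_empty] at h1
  have h2 : Tendsto (fun _ : ℕ => μ ∅) atTop (𝓝 0) := h1.summable.tendsto_atTop_zero
  exact tendsto_nhds_unique tendsto_const_nhds h2

/-- finite additivity over a finset -/
theorem VM.finsetUnion {μ : Set Ω → Y} (h : VM μ) (B : ℕ → Set Ω)
    (hB : ∀ i, MeasurableSet (B i)) (hd : Pairwise (Function.onFun Disjoint B))
    (s : Finset ℕ) : μ (⋃ i ∈ s, B i) = ∑ i ∈ s, μ (B i) := by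
  set C : ℕ → Set Ω := fun i => if i ∈ s then B i else ∅ with hC
  have hCmeas : ∀ i, MeasurableSet (C i) := by
    intro i; by_cases hi : i ∈ s <;> simp [hC, hi, hB i]
  have hCd : Pairwise (Function.onFun Disjoint C) := by
    intro i j hij
    by_cases hi : i ∈ s <;> by_cases hj : j ∈ s <;>
      simp [Function.onFun, hC, hi, hj, hd hij]
  have h1 := h C hCmeas hCd
  have hvals : (fun i : ℕ => μ (C i)) = fun i => if i ∈ s then μ (B i) else 0 := by
    funext i; by_cases hi : i ∈ s <;> simp [hC, hi, h.empty]
  have h3 := hasSum_sum_of_ne_finset_zero (s := s) (L := SummationFilter.unconditional ℕ)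
    (f := fun i => if i ∈ s then μ (B i) else 0) (by intro b hb; simp [hb])
  have hsum : (∑ b ∈ s, if b ∈ s then μ (B b) else 0) = ∑ i ∈ s, μ (B i) :=
    Finset.sum_congr rfl (fun b hb => by simp [hb])
  rw [hsum] at h3
  rw [← hvals] at h3
  have hU : (⋃ i, C i) = ⋃ i ∈ s, B i := by
    ext x; simp only [Set.mem_iUnion, hC]
    constructor
    · rintro ⟨i, hx⟩
      by_cases hi : i ∈ s
      · exact ⟨i, hi, by simpa [hi] using hx⟩
      · simp [hi] at hx
    · rintro ⟨i, hi, hx⟩; exact ⟨i, by simp [hi, hx]⟩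
  rw [hU] at h1
  exact h1.unique h3

/-- binary additivity -/
theorem VM.pair {μ : Set Ω → Y} (h : VM μ) {A B : Set Ω}
    (hA : MeasurableSet A) (hB : MeasurableSet B) (hd : Disjoint A B) :
    μ (A ∪ B) = μ A + μ B := by
  set C : ℕ → Set Ω := fun i => if i = 0 then A else if i = 1 then B else ∅ with hC
  have hCmeas : ∀ i, MeasurableSet (C i) := by
    intro i
    rcases i with _ | _ | i <;> simp [hC, hA, hB]
  have hCd : Pairwise (Function.onFun Disjoint C) := by
    intro i j hij
    rcases i with _ | _ | i <;> rcases j with _ | _ | j <;>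
      simp_all [Function.onFun, hC, hd, hd.symm] <;>
      first
        | exact hd
        | exact hd.symm
        | exact disjoint_bot_right
        | exact disjoint_bot_left
  have := h.finsetUnion C hCmeas hCd {0, 1}
  have hU : (⋃ i ∈ ({0, 1} : Finset ℕ), C i) = A ∪ B := by
    ext x; simp [hC]
  rw [hU] at this
  simpa [hC] using this

/-- the tail of a disjoint family -/
def Tail (B : ℕ → Set Ω) (n : ℕ) : Set Ω := ⋃ i, ⋃ (_ : n ≤ i), B i

theorem Tail.meas {B : ℕ → Set Ω} (hB : ∀ i, MeasurableSet (B i)) (n : ℕ) :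
    MeasurableSet (Tail B n) :=
  MeasurableSet.iUnion fun i => MeasurableSet.iUnion fun _ => hB i

theorem Tail.antitone {B : ℕ → Set Ω} {n m : ℕ} (h : n ≤ m) : Tail B m ⊆ Tail B n := by
  intro x hx
  simp only [Tail, Set.mem_iUnion] at hx ⊢
  obtain ⟨i, hi, hx⟩ := hx
  exact ⟨i, h.trans hi, hx⟩

theorem VM.tendsto_tail {μ : Set Ω → Y} (h : VM μ) {B : ℕ → Set Ω}
    (hB : ∀ i, MeasurableSet (B i)) (hd : Pairwise (Function.onFun Disjoint B))
    {D : Set Ω} (hD : MeasurableSet D) :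
    Tendsto (fun m => μ (D ∩ Tail B m)) atTop (𝓝 0) := by
  set C : ℕ → Set Ω := fun i => D ∩ B i with hC
  have hCmeas : ∀ i, MeasurableSet (C i) := fun i => hD.inter (hB i)
  have hCd : Pairwise (Function.onFun Disjoint C) := fun i j hij =>
    ((hd hij).mono (Set.inter_subset_right) (Set.inter_subset_right))
  have h1 : HasSum (fun i => μ (C i)) (μ (D ∩ ⋃ i, B i)) := by
    have := h C hCmeas hCd
    rwa [show (⋃ i, C i) = D ∩ ⋃ i, B i by rw [hC]; rw [← Set.inter_iUnion]] at this
  have h2 := h1.tendsto_sum_nat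
  have key : ∀ m, μ (D ∩ Tail B m) = μ (D ∩ ⋃ i, B i) - ∑ i ∈ Finset.range m, μ (C i) := by
    intro m
    have hfin : μ (⋃ i ∈ Finset.range m, C i) = ∑ i ∈ Finset.range m, μ (C i) :=
      h.finsetUnion C hCmeas hCd _
    have hsplit : D ∩ ⋃ i, B i = (⋃ i ∈ Finset.range m, C i) ∪ (D ∩ Tail B m) := by
      ext x
      simp only [Set.mem_inter_iff, Set.mem_iUnion, Set.mem_union, Finset.mem_range, hC,
        Tail]
      constructor
      · rintro ⟨hxD, i, hxB⟩
        rcases lt_or_ge i m with hi | hi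
        · exact Or.inl ⟨i, hi, hxD, hxB⟩
        · exact Or.inr ⟨hxD, i, hi, hxB⟩
      · rintro (⟨i, _, hxD, hxB⟩ | ⟨hxD, i, _, hxB⟩) <;> exact ⟨hxD, i, hxB⟩
    have hdisj : Disjoint (⋃ i ∈ Finset.range m, C i) (D ∩ Tail B m) := by
      rw [Set.disjoint_left]
      rintro x hx1 hx2
      simp only [Set.mem_iUnion, Finset.mem_range, hC, Set.mem_inter_iff] at hx1
      obtain ⟨i, him, _, hxB⟩ := hx1
      obtain ⟨_, hx2⟩ := hx2
      simp only [Tail, Set.mem_iUnion] at hx2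
      obtain ⟨j, hj, hxB'⟩ := hx2
      have hij : i ≠ j := by omega
      exact (hd hij).le_bot ⟨hxB, hxB'⟩
    have := h.pair (Finset.measurableSet_biUnion (Finset.range m)
      (fun i _ => hCmeas i)) (hD.inter (Tail.meas hB m)) hdisj
    rw [← hsplit] at this
    rw [this, hfin]; abel
  simp only [key]
  have : Tendsto (fun m => μ (D ∩ ⋃ i, B i) - ∑ i ∈ Finset.range m, μ (C i)) atTop
      (𝓝 (μ (D ∩ ⋃ i, B i) - μ (D ∩ ⋃ i, B i))) := tendsto_const_nhds.sub h2
  simpa using this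

theorem VM.tail_small {μ : Set Ω → Y} (h : VM μ) {B : ℕ → Set Ω}
    (hB : ∀ i, MeasurableSet (B i)) (hd : Pairwise (Function.onFun Disjoint B))
    {ε : ℝ} (hε : 0 < ε) :
    ∃ n, ∀ A, MeasurableSet A → A ⊆ Tail B n → ‖μ A‖ ≤ ε := by
  by_contra hcon
  push_neg at hcon
  choose A hAmeas hAsub hAnorm using hcon
  have hstep : ∀ n : ℕ, ∃ m : ℕ, n < m ∧ ‖μ (A n ∩ Tail B m)‖ < ε / 2 := by
    intro n
    have h1 : Tendsto (fun m => μ (A n ∩ Tail B m)) atTop (𝓝 0) :=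
      h.tendsto_tail hB hd (hAmeas n)
    have h2 : ∀ᶠ m in atTop, ‖μ (A n ∩ Tail B m)‖ < ε / 2 := by
      have := h1.norm
      rw [show ‖(0 : Y)‖ = 0 by simp] at this
      exact this.eventually_lt_const (by linarith)
    obtain ⟨m, hm⟩ := (h2.and (eventually_gt_atTop n)).exists
    exact ⟨m, hm.2, hm.1⟩
  choose next hnext1 hnext2 using hstep
  set g : ℕ → ℕ := fun k => next^[k] 0 with hg
  have hgsucc : ∀ k, g (k + 1) = next (g k) := by
    intro k; rw [hg]; simp [Function.iterate_succ_apply']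
  have hgmono : StrictMono g := strictMono_nat_of_lt_succ (fun k => by
    rw [hgsucc]; exact hnext1 (g k))
  set C : ℕ → Set Ω := fun k => A (g k) \ Tail B (g (k + 1)) with hCdef
  have hCmeas : ∀ k, MeasurableSet (C k) := fun k =>
    (hAmeas _).diff (Tail.meas hB _)
  have hClargeNorm : ∀ k, ε / 2 < ‖μ (C k)‖ := by
    intro k
    have hsplit : A (g k) = C k ∪ (A (g k) ∩ Tail B (g (k + 1))) := by
      rw [hCdef]; simp [Set.diff_union_inter]
    have hdisj : Disjoint (C k) (A (g k) ∩ Tail B (g (k + 1))) :=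
      Set.disjoint_of_subset_right Set.inter_subset_right Set.disjoint_sdiff_left
    have hadd := h.pair (hCmeas k) ((hAmeas _).inter (Tail.meas hB _)) hdisj
    rw [← hsplit] at hadd
    have h1 : ε < ‖μ (A (g k))‖ := hAnorm _
    have h2 : ‖μ (A (g k) ∩ Tail B (g (k + 1)))‖ < ε / 2 := by
      rw [hgsucc k]; exact hnext2 _
    have : ‖μ (A (g k))‖ ≤ ‖μ (C k)‖ + ‖μ (A (g k) ∩ Tail B (g (k + 1)))‖ := by
      rw [hadd]; exact norm_add_le _ _
    linarith
  have hCd : Pairwise (Function.onFun Disjoint C) := by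
    have key : ∀ k l, k < l → Disjoint (C k) (C l) := by
      intro k l hkl
      have h1 : C l ⊆ Tail B (g (k + 1)) := by
        intro x hx
        have hx2 : x ∈ A (g l) := hx.1
        have := hAsub (g l) hx2
        exact Tail.antitone (hgmono.monotone (by omega)) this
      have h2 : Disjoint (C k) (Tail B (g (k + 1))) := Set.disjoint_sdiff_left
      exact h2.mono_right h1
    intro k l hkl
    rcases lt_or_gt_of_ne hkl with h' | h'
    · exact key k l h'
    · exact (key l k h').symm
  have hsum := h C hCmeas hCd
  have hlim : Tendsto (fun k => μ (C k)) atTop (𝓝 0) := hsum.summable.tendsto_atTop_zero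
  have : ∀ᶠ k in atTop, ‖μ (C k)‖ < ε / 2 := by
    have := hlim.norm
    rw [show ‖(0 : Y)‖ = 0 by simp] at this
    exact this.eventually_lt_const (by linarith)
  obtain ⟨k, hk⟩ := this.exists
  exact absurd (hClargeNorm k) (by linarith)

theorem VM.bounded {μ : Set Ω → Y} (h : VM μ) :
    ∃ M : ℝ, ∀ A, MeasurableSet A → ‖μ A‖ ≤ M := by
  by_contra hcon
  push_neg at hcon
  set Ub : Set Ω → Prop := fun S => ∀ r : ℝ, ∃ A, MeasurableSet A ∧ A ⊆ S ∧ r < ‖μ A‖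
    with hUb
  have hUbuniv : Ub Set.univ := by
    intro r
    obtain ⟨A, hA, hr⟩ := hcon r
    exact ⟨A, hA, Set.subset_univ A, hr⟩
  have hstep : ∀ S, MeasurableSet S → Ub S →
      ∃ C, MeasurableSet C ∧ C ⊆ S ∧ 1 ≤ ‖μ C‖ ∧ Ub (S \ C) := by
    intro S hS hUbS
    obtain ⟨A, hA, hAS, hAr⟩ := hUbS (‖μ S‖ + 1)
    have hSA : μ S = μ A + μ (S \ A) := by
      have := h.pair hA (hS.diff hA) Set.disjoint_sdiff_right
      rwa [Set.union_diff_cancel hAS] at this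
    have hdiff : 1 ≤ ‖μ (S \ A)‖ := by
      have : ‖μ A‖ ≤ ‖μ S‖ + ‖μ (S \ A)‖ := by
        calc ‖μ A‖ = ‖μ S - μ (S \ A)‖ := by rw [hSA]; congr 1; abel
        _ ≤ ‖μ S‖ + ‖μ (S \ A)‖ := norm_sub_le _ _
      linarith
    by_cases hUbA : Ub A
    · refine ⟨S \ A, hS.diff hA, Set.diff_subset, hdiff, ?_⟩
      have : S \ (S \ A) = A := by
        rw [Set.diff_diff_right, Set.diff_self, Set.empty_union,
          Set.inter_eq_self_of_subset_right hAS]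
      rw [this]; exact hUbA
    · refine ⟨A, hA, hAS, by linarith [norm_nonneg (μ S)], ?_⟩
      by_contra hUbSA
      simp only [hUb] at hUbA hUbSA
      push_neg at hUbA hUbSA
      obtain ⟨r₁, hr₁⟩ := hUbA
      obtain ⟨r₂, hr₂⟩ := hUbSA
      obtain ⟨D, hD, hDS, hDr⟩ := hUbS (r₁ + r₂)
      have hDsplit : μ D = μ (D ∩ A) + μ (D \ A) := by
        have := h.pair (hD.inter hA) (hD.diff hA)
          (Set.disjoint_of_subset_left Set.inter_subset_right Set.disjoint_sdiff_right)
        rwa [Set.inter_union_diff] at this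
      have h1 : ‖μ (D ∩ A)‖ ≤ r₁ := hr₁ _ (hD.inter hA) Set.inter_subset_right
      have h2 : ‖μ (D \ A)‖ ≤ r₂ := hr₂ _ (hD.diff hA)
        (Set.diff_subset_diff_left hDS)
      have : ‖μ D‖ ≤ r₁ + r₂ := by
        rw [hDsplit]; exact (norm_add_le _ _).trans (by linarith)
      linarith
  choose! Cf hCmeas hCsub hCnorm hCub using hstep
  set seq : ℕ → Set Ω := fun n => (fun S => S \ Cf S)^[n] Set.univ with hseq
  have hseqsucc : ∀ n, seq (n + 1) = seq n \ Cf (seq n) := by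
    intro n; rw [hseq]; simp [Function.iterate_succ_apply']
  have hinv : ∀ n, MeasurableSet (seq n) ∧ Ub (seq n) := by
    intro n
    induction n with
    | zero => exact ⟨MeasurableSet.univ, hUbuniv⟩
    | succ n ih =>
      rw [hseqsucc]
      exact ⟨ih.1.diff (hCmeas _ ih.1 ih.2), hCub _ ih.1 ih.2⟩
  have hseqanti : ∀ {k l : ℕ}, k ≤ l → seq l ⊆ seq k := by
    intro k l hkl
    induction l with
    | zero => simp_all
    | succ l ih =>
      rcases Nat.lt_or_ge k (l + 1) with h' | h'
      · have h1 : seq (l + 1) ⊆ seq l := by rw [hseqsucc]; exact Set.diff_subset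
        exact h1.trans (ih (by omega))
      · have : k = l + 1 := by omega
        subst this; rfl
  set C : ℕ → Set Ω := fun k => Cf (seq k) with hCsdef
  have hCmeas' : ∀ k, MeasurableSet (C k) := fun k => hCmeas _ (hinv k).1 (hinv k).2
  have hCnorm' : ∀ k, 1 ≤ ‖μ (C k)‖ := fun k => hCnorm _ (hinv k).1 (hinv k).2
  have hCd : Pairwise (Function.onFun Disjoint C) := by
    have key : ∀ k l, k < l → Disjoint (C k) (C l) := by
      intro k l hkl
      have h1 : C l ⊆ seq (k + 1) := (hCsub _ (hinv l).1 (hinv l).2).trans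
        (hseqanti (by omega))
      have h2 : seq (k + 1) ⊆ (C k)ᶜ := by
        rw [hseqsucc]
        intro x hx
        exact hx.2
      exact Set.disjoint_right.mpr fun x hxl => (h1.trans h2) hxl
    intro k l hkl
    rcases lt_or_gt_of_ne hkl with h' | h'
    · exact key k l h'
    · exact (key l k h').symm
  have hsum := h C hCmeas' hCd
  have hlim : Tendsto (fun k => μ (C k)) atTop (𝓝 0) := hsum.summable.tendsto_atTop_zero
  have hev : ∀ᶠ k in atTop, ‖μ (C k)‖ < 1 := by
    have := hlim.norm
    rw [show ‖(0 : Y)‖ = 0 by simp] at this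
    exact this.eventually_lt_const one_pos
  obtain ⟨k, hk⟩ := hev.exists
  exact absurd (hCnorm' k) (by linarith)

/-- finite additivity predicate -/
def FinAdd (μ : Set Ω → Y) : Prop :=
  ∀ A B : Set Ω, MeasurableSet A → MeasurableSet B → Disjoint A B → μ (A ∪ B) = μ A + μ B

theorem FinAdd.empty {μ : Set Ω → Y} (h : FinAdd μ) : μ ∅ = 0 := by
  have := h ∅ ∅ MeasurableSet.empty MeasurableSet.empty disjoint_bot_left
  simp only [Set.union_empty] at this
  have h2 : μ ∅ + μ ∅ = μ ∅ + 0 := by rw [add_zero, ← this]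
  exact add_left_cancel h2

theorem FinAdd.finsetUnion {μ : Set Ω → Y} (h : FinAdd μ) (B : ℕ → Set Ω)
    (hB : ∀ i, MeasurableSet (B i)) (hd : Pairwise (Function.onFun Disjoint B))
    (s : Finset ℕ) : μ (⋃ i ∈ s, B i) = ∑ i ∈ s, μ (B i) := by
  induction s using Finset.induction with
  | empty => simpa using h.empty
  | insert a s ha ih =>
    have hdisj : Disjoint (B a) (⋃ i ∈ s, B i) := by
      rw [Set.disjoint_right]
      intro x hx hxa
      simp only [Set.mem_iUnion] at hx
      obtain ⟨i, hi, hx⟩ := hx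
      have : a ≠ i := by rintro rfl; exact ha hi
      exact (hd this).le_bot ⟨hxa, hx⟩
    have hmeas : MeasurableSet (⋃ i ∈ s, B i) :=
      Finset.measurableSet_biUnion s (fun i _ => hB i)
    rw [Finset.set_biUnion_insert, h _ _ (hB a) hmeas hdisj, ih,
      Finset.sum_insert ha]

end OVMDil

namespace OVMDil

open Filter Topology BoundedContinuousFunction

attribute [local instance] Classical.propDecidable

/-- type synonym for `Set Ω`, carrying the discrete topology -/
def SetO (Ω : Type w) : Type w := Set Ω

instance {Ω : Type w} : TopologicalSpace (SetO Ω) := ⊥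
instance {Ω : Type w} : DiscreteTopology (SetO Ω) := ⟨rfl⟩

variable {Ω : Type w} [MeasurableSpace Ω]
variable {Y : Type v} [NormedAddCommGroup Y] [NormedSpace ℂ Y]

/-- build a bounded function on `SetO Ω` -/
def mkBCF (f : Set Ω → Y) (C : ℝ) (hC : ∀ A, ‖f A‖ ≤ C) :
    BoundedContinuousFunction (SetO Ω) Y :=
  BoundedContinuousFunction.ofNormedAddCommGroup f continuous_of_discreteTopology C hC

@[simp] theorem mkBCF_apply (f : Set Ω → Y) (C : ℝ) (hC : ∀ A, ‖f A‖ ≤ C) (A : Set Ω) :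
    mkBCF f C hC A = f A := rfl

variable (Ω Y) in
/-- The space of (bounded) countably additive `Y`-valued vector measures on `Ω`,
vanishing on non-measurable sets, as a submodule of the bounded functions on `Set Ω`
(with discrete topology). -/
def ZS : Submodule ℂ (BoundedContinuousFunction (SetO Ω) Y) where
  carrier := {f | (∀ A : Set Ω, ¬MeasurableSet A → f A = 0) ∧ VM (fun A : Set Ω => f A)}
  add_mem' := by
    rintro f g ⟨hf1, hf2⟩ ⟨hg1, hg2⟩
    refine ⟨fun A hA => by show f A + g A = 0; simp [hf1 A hA, hg1 A hA], fun B hB hd => ?_⟩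
    have := (hf2 B hB hd).add (hg2 B hB hd)
    exact this
  zero_mem' := by
    refine ⟨fun A hA => rfl, fun B hB hd => ?_⟩
    exact hasSum_zero
  smul_mem' := by
    rintro c f ⟨hf1, hf2⟩
    refine ⟨fun A hA => by simp [hf1 A hA], fun B hB hd => ?_⟩
    have := (hf2 B hB hd).const_smul c
    simpa using this

theorem mem_ZS_iff {f : BoundedContinuousFunction (SetO Ω) Y} :
    f ∈ ZS Ω Y ↔ (∀ A : Set Ω, ¬MeasurableSet A → f A = 0) ∧ VM (fun A : Set Ω => f A) :=
  Iff.rfl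

theorem ZS_closed :
    IsClosed ((ZS Ω Y : Submodule ℂ (BoundedContinuousFunction (SetO Ω) Y)) :
      Set (BoundedContinuousFunction (SetO Ω) Y)) := by
  apply isClosed_of_closure_subset
  intro f hf
  have hvan : ∀ A : Set Ω, ¬MeasurableSet A → f A = 0 := by
    intro A hA
    have hcl : IsClosed {g : BoundedContinuousFunction (SetO Ω) Y | g A = 0} :=
      isClosed_eq (continuous_eval_const _) continuous_const
    exact (hcl.closure_subset_iff.mpr (fun g hg => hg.1 A hA)) hf
  have hfa : FinAdd (fun A : Set Ω => f A) := by
    intro A B hA hB hd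
    have hcl : IsClosed {g : BoundedContinuousFunction (SetO Ω) Y |
        g (A ∪ B : Set Ω) = g A + g B} :=
      isClosed_eq (continuous_eval_const _)
        ((continuous_eval_const _).add
          (continuous_eval_const _))
    exact (hcl.closure_subset_iff.mpr (fun g hg => hg.2.pair hA hB hd)) hf
  refine ⟨hvan, ?_⟩
  intro B hB hd
  rw [HasSum, Metric.tendsto_nhds]
  intro ε hε
  rw [SummationFilter.unconditional_filter, eventually_atTop]
  obtain ⟨g, hg, hfg⟩ := Metric.mem_closure_iff.mp hf (ε / 3) (by linarith)
  obtain ⟨n, hn⟩ := hg.2.tail_small hB hd (show (0:ℝ) < ε / 3 by linarith)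
  refine ⟨Finset.range n, fun s hs => ?_⟩
  set rest : Set Ω := (⋃ i, B i) \ ⋃ i ∈ s, B i with hrest
  have hsU : MeasurableSet (⋃ i ∈ s, B i) := Finset.measurableSet_biUnion s (fun i _ => hB i)
  have hrestmeas : MeasurableSet rest := (MeasurableSet.iUnion hB).diff hsU
  have hsplit : (⋃ i, B i) = (⋃ i ∈ s, B i) ∪ rest := by
    rw [hrest, Set.union_diff_cancel]
    exact Set.iUnion₂_subset fun i _ => Set.subset_iUnion B i
  have hdisj : Disjoint (⋃ i ∈ s, B i) rest := Set.disjoint_sdiff_right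
  have hfd : f (⋃ i, B i) = f (⋃ i ∈ s, B i) + f rest := by
    rw [hsplit]; exact hfa _ _ hsU hrestmeas hdisj
  have hsum : (∑ i ∈ s, f (B i)) = f (⋃ i ∈ s, B i) :=
    (hfa.finsetUnion B hB hd s).symm
  have hrestsub : rest ⊆ Tail B n := by
    intro x hx
    obtain ⟨hx1, hx2⟩ := hx
    simp only [Set.mem_iUnion] at hx1
    obtain ⟨i, hxi⟩ := hx1
    have his : i ∉ s := by
      intro hi
      exact hx2 (Set.mem_biUnion hi hxi)
    have hin : n ≤ i := by
      by_contra hlt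
      exact his (hs (Finset.mem_range.mpr (by omega)))
    exact Set.mem_iUnion.mpr ⟨i, Set.mem_iUnion.mpr ⟨hin, hxi⟩⟩
  have hgrest : ‖g rest‖ ≤ ε / 3 := hn rest hrestmeas hrestsub
  have hfrest : ‖f rest‖ ≤ 2 * ε / 3 := by
    have h1 : ‖f rest - g rest‖ ≤ ε / 3 := by
      have := BoundedContinuousFunction.dist_coe_le_dist (f := f) (g := g) (rest : SetO Ω)
      rw [dist_eq_norm] at this
      linarith
    calc ‖f rest‖ = ‖(f rest - g rest) + g rest‖ := by rw [sub_add_cancel]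
    _ ≤ ‖f rest - g rest‖ + ‖g rest‖ := norm_add_le _ _
    _ ≤ 2 * ε / 3 := by linarith
  rw [dist_eq_norm]
  have : (∑ i ∈ s, f (B i)) - f (⋃ i, B i) = -(f rest) := by
    rw [hsum, hfd]; abel
  rw [this, norm_neg]
  linarith

/-- restriction of a vector measure to a set -/
noncomputable def resBCF (B : Set Ω) (f : BoundedContinuousFunction (SetO Ω) Y) :
    BoundedContinuousFunction (SetO Ω) Y :=
  mkBCF (fun A => if MeasurableSet A then f ((A ∩ B : Set Ω)) else 0) ‖f‖ (by
    intro A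
    by_cases hA : MeasurableSet A
    · simp only [hA, if_pos]
      exact f.norm_coe_le_norm _
    · simp only [hA, if_neg, not_false_iff]
      simpa using norm_nonneg f)

theorem resBCF_apply (B : Set Ω) (f : BoundedContinuousFunction (SetO Ω) Y) (A : Set Ω) :
    resBCF B f A = if MeasurableSet A then f ((A ∩ B : Set Ω)) else 0 := rfl

theorem resBCF_norm_le (B : Set Ω) (f : BoundedContinuousFunction (SetO Ω) Y) :
    ‖resBCF B f‖ ≤ ‖f‖ := by
  rw [resBCF]
  exact BoundedContinuousFunction.norm_ofNormedAddCommGroup_le _ (norm_nonneg f) _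

theorem resBCF_mem {B : Set Ω} (hB : MeasurableSet B)
    {f : BoundedContinuousFunction (SetO Ω) Y} (hf : f ∈ ZS Ω Y) :
    resBCF B f ∈ ZS Ω Y := by
  refine ⟨fun A hA => by rw [resBCF_apply, if_neg hA], ?_⟩
  intro A hA hd
  have hmeasU : MeasurableSet (⋃ i, A i) := MeasurableSet.iUnion hA
  have hvals : ∀ i, resBCF B f (A i) = f ((A i ∩ B : Set Ω)) := fun i => by
    rw [resBCF_apply, if_pos (hA i)]
  have hvalU : resBCF B f ((⋃ i, A i) : Set Ω) = f (((⋃ i, A i) ∩ B : Set Ω)) := by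
    rw [resBCF_apply, if_pos hmeasU]
  simp only [hvals, hvalU]
  have := hf.2 (fun i => A i ∩ B) (fun i => (hA i).inter hB)
    (fun i j hij => (hd hij).mono Set.inter_subset_left Set.inter_subset_left)
  rwa [show (⋃ i, A i ∩ B) = (⋃ i, A i) ∩ B by rw [Set.iUnion_inter]] at this

theorem resBCF_add (B : Set Ω) (f g : BoundedContinuousFunction (SetO Ω) Y) :
    resBCF B (f + g) = resBCF B f + resBCF B g := by
  apply BoundedContinuousFunction.ext
  intro A
  simp only [BoundedContinuousFunction.add_apply, resBCF_apply]
  by_cases hA : MeasurableSet (A : Set Ω)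
  · change (if MeasurableSet (show Set Ω from A) then (f + g) (Set.inter (α := Ω) A B) else 0) = (if MeasurableSet (show Set Ω from A) then f (Set.inter (α := Ω) A B) else 0) + (if MeasurableSet (show Set Ω from A) then g (Set.inter (α := Ω) A B) else 0)
    rw [if_pos hA, if_pos hA, if_pos hA] <;> rfl
  · change (if MeasurableSet (show Set Ω from A) then (f + g) (Set.inter (α := Ω) A B) else 0) = (if MeasurableSet (show Set Ω from A) then f (Set.inter (α := Ω) A B) else 0) + (if MeasurableSet (show Set Ω from A) then g (Set.inter (α := Ω) A B) else 0)
    rw [if_neg hA, if_neg hA, if_neg hA, add_zero]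

theorem resBCF_smul (B : Set Ω) (c : ℂ) (f : BoundedContinuousFunction (SetO Ω) Y) :
    resBCF B (c • f) = c • resBCF B f := by
  apply BoundedContinuousFunction.ext
  intro A
  simp only [BoundedContinuousFunction.smul_apply, resBCF_apply]
  by_cases hA : MeasurableSet (A : Set Ω)
  · change (if MeasurableSet (show Set Ω from A) then (c • f) (Set.inter (α := Ω) A B) else 0) = c • (if MeasurableSet (show Set Ω from A) then f (Set.inter (α := Ω) A B) else 0)
    rw [if_pos hA, if_pos hA] <;> rfl
  · change (if MeasurableSet (show Set Ω from A) then (c • f) (Set.inter (α := Ω) A B) else 0) = c • (if MeasurableSet (show Set Ω from A) then f (Set.inter (α := Ω) A B) else 0)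
    rw [if_neg hA, if_neg hA, smul_zero]

variable [CompleteSpace Y]

variable (Ω Y) in
/-- the projection associated to a measurable set -/
noncomputable def Fop (B : Set Ω) : ↥(ZS Ω Y) →L[ℂ] ↥(ZS Ω Y) :=
  if hB : MeasurableSet B then
    LinearMap.mkContinuous
      { toFun := fun μ => ⟨resBCF B μ.1, resBCF_mem hB μ.2⟩
        map_add' := fun μ ν => by
          apply Subtype.ext
          simp only [Submodule.coe_add]
          exact resBCF_add B μ.1 ν.1
        map_smul' := fun c μ => by
          apply Subtype.ext
          simp only [Submodule.coe_smul, RingHom.id_apply]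
          exact resBCF_smul B c μ.1 }
      1 (fun μ => by
        rw [one_mul]
        change ‖resBCF B μ.1‖ ≤ ‖μ‖
        rw [Submodule.coe_norm]
        exact resBCF_norm_le B μ.1)
  else 0

theorem Fop_apply {B : Set Ω} (hB : MeasurableSet B) (μ : ↥(ZS Ω Y)) :
    ((Fop Ω Y B μ : ↥(ZS Ω Y)) : BoundedContinuousFunction (SetO Ω) Y) = resBCF B μ.1 := by
  rw [Fop, dif_pos hB]
  rfl

theorem Fop_univ : Fop Ω Y Set.univ = ContinuousLinearMap.id ℂ ↥(ZS Ω Y) := by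
  apply ContinuousLinearMap.ext
  intro μ
  rw [ContinuousLinearMap.id_apply]
  apply Subtype.ext
  rw [Fop_apply MeasurableSet.univ]
  apply BoundedContinuousFunction.ext
  intro A
  have key : ∀ A : Set Ω, resBCF Set.univ (μ.1) A = μ.1 A := by
    intro A
    rw [resBCF_apply]
    by_cases hA : MeasurableSet A
    · rw [if_pos hA, Set.inter_univ]
    · rw [if_neg hA]
      exact (μ.2.1 A hA).symm
  exact key A

theorem Fop_idem {B : Set Ω} (hB : MeasurableSet B) :
    (Fop Ω Y B).comp (Fop Ω Y B) = Fop Ω Y B := by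
  apply ContinuousLinearMap.ext
  intro μ
  apply Subtype.ext
  rw [ContinuousLinearMap.comp_apply, Fop_apply hB, Fop_apply hB]
  apply BoundedContinuousFunction.ext
  intro A
  have key : ∀ A : Set Ω, resBCF B (resBCF B μ.1) A = resBCF B μ.1 A := by
    intro A
    by_cases hA : MeasurableSet A
    · rw [resBCF_apply, if_pos hA, resBCF_apply, if_pos (hA.inter hB),
        resBCF_apply, if_pos hA, Set.inter_assoc, Set.inter_self]
    · rw [resBCF_apply, if_neg hA, resBCF_apply, if_neg hA]
  exact key A

theorem Fop_ovm (B : ℕ → Set Ω) (hB : ∀ i, MeasurableSet (B i))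
    (hd : Pairwise (Function.onFun Disjoint B)) (μ : ↥(ZS Ω Y)) :
    HasSum (fun i : ℕ => Fop Ω Y (B i) μ) (Fop Ω Y (⋃ i, B i) μ) := by
  have hmeasU : MeasurableSet (⋃ i, B i) := MeasurableSet.iUnion hB
  rw [HasSum]
  rw [tendsto_subtype_rng]
  have hco : ∀ s : Finset ℕ,
      ((∑ i ∈ s, Fop Ω Y (B i) μ : ↥(ZS Ω Y)) : BoundedContinuousFunction (SetO Ω) Y)
      = ∑ i ∈ s, resBCF (B i) μ.1 := by
    intro s
    rw [Submodule.coe_sum]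
    exact Finset.sum_congr rfl fun i _ => Fop_apply (hB i) μ
  simp only [hco, Fop_apply hmeasU]
  rw [Metric.tendsto_nhds]
  intro ε hε
  rw [SummationFilter.unconditional_filter, eventually_atTop]
  have hfa : FinAdd (fun A : Set Ω => μ.1 A) := fun A B hA hB hd => μ.2.2.pair hA hB hd
  obtain ⟨n, hn⟩ := μ.2.2.tail_small hB hd (show (0:ℝ) < ε / 2 by linarith)
  refine ⟨Finset.range n, fun s hs => ?_⟩
  rw [dist_eq_norm]
  have key : ∀ A : Set Ω, MeasurableSet A →
      ‖(∑ i ∈ s, μ.1 ((A ∩ B i : Set Ω))) - μ.1 ((A ∩ ⋃ i, B i : Set Ω))‖ ≤ ε / 2 := by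
    intro A hA
    set rest : Set Ω := (A ∩ ⋃ i, B i) \ ⋃ i ∈ s, (A ∩ B i) with hrest
    have hsU : MeasurableSet (⋃ i ∈ s, (A ∩ B i)) :=
      Finset.measurableSet_biUnion s (fun i _ => hA.inter (hB i))
    have hrestmeas : MeasurableSet rest := (hA.inter hmeasU).diff hsU
    have hsplit : (A ∩ ⋃ i, B i) = (⋃ i ∈ s, (A ∩ B i)) ∪ rest := by
      rw [hrest, Set.union_diff_cancel]
      exact Set.iUnion₂_subset fun i _ =>
        Set.inter_subset_inter_right A (Set.subset_iUnion B i)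
    have hdisj : Disjoint (⋃ i ∈ s, (A ∩ B i)) rest := Set.disjoint_sdiff_right
    have h1 : μ.1 ((A ∩ ⋃ i, B i : Set Ω)) = μ.1 ((⋃ i ∈ s, (A ∩ B i) : Set Ω)) + μ.1 rest := by
      rw [hsplit]; exact hfa _ _ hsU hrestmeas hdisj
    have h2 : μ.1 ((⋃ i ∈ s, (A ∩ B i) : Set Ω)) = ∑ i ∈ s, μ.1 ((A ∩ B i : Set Ω)) :=
      hfa.finsetUnion (fun i => A ∩ B i) (fun i => hA.inter (hB i))
        (fun i j hij => (hd hij).mono Set.inter_subset_right Set.inter_subset_right) s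
    have hrestsub : rest ⊆ Tail B n := by
      intro x hx
      obtain ⟨hx1, hx2⟩ := hx
      obtain ⟨hxA, hx1⟩ := hx1
      simp only [Set.mem_iUnion] at hx1
      obtain ⟨i, hxi⟩ := hx1
      have his : i ∉ s := by
        intro hi
        exact hx2 (Set.mem_biUnion hi ⟨hxA, hxi⟩)
      have hin : n ≤ i := by
        by_contra hlt
        exact his (hs (Finset.mem_range.mpr (by omega)))
      exact Set.mem_iUnion.mpr ⟨i, Set.mem_iUnion.mpr ⟨hin, hxi⟩⟩
    have hrnorm : ‖μ.1 rest‖ ≤ ε / 2 := hn rest hrestmeas hrestsub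
    have heq : (∑ i ∈ s, μ.1 ((A ∩ B i : Set Ω))) - μ.1 ((A ∩ ⋃ i, B i : Set Ω)) = -(μ.1 rest) := by
      rw [h1, ← h2]; abel
    rw [heq, norm_neg]
    exact hrnorm
  have hbound : ‖(∑ i ∈ s, resBCF (B i) μ.1) - resBCF (⋃ i, B i) μ.1‖ ≤ ε / 2 := by
    rw [BoundedContinuousFunction.norm_le (by linarith)]
    intro A
    rw [BoundedContinuousFunction.sub_apply]
    have hsumA : ((∑ i ∈ s, resBCF (B i) μ.1 : _) : BoundedContinuousFunction (SetO Ω) Y) A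
        = ∑ i ∈ s, (resBCF (B i) μ.1) A := by
      rw [BoundedContinuousFunction.coe_sum]; simp
    rw [hsumA]
    change ‖(∑ i ∈ s, (if MeasurableSet (show Set Ω from A) then μ.1 (Set.inter (α := Ω) A (B i)) else 0)) - (if MeasurableSet (show Set Ω from A) then μ.1 (Set.inter (α := Ω) A (⋃ i, B i)) else 0)‖ ≤ ε / 2
    by_cases hA : MeasurableSet A
    · simp only [resBCF_apply, hA, if_true]
      exact key A hA
    · simp only [resBCF_apply, hA, if_false]
      simp only [Finset.sum_const_zero, sub_zero, norm_zero]
      linarith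
  linarith

end OVMDil

namespace OVMDil
open Filter Topology BoundedContinuousFunction
theorem ovm_dilation_aux
    {Ω : Type w} [MeasurableSpace Ω]
    {X : Type u} [NormedAddCommGroup X] [NormedSpace ℂ X] [CompleteSpace X]
    {Y : Type v} [NormedAddCommGroup Y] [NormedSpace ℂ Y] [CompleteSpace Y]
    (E : Set Ω → (X →L[ℂ] Y)) (hE : IsOperatorValuedMeasure E) :
    ∃ (S : ↥(ZS Ω Y) →L[ℂ] Y) (T : X →L[ℂ] ↥(ZS Ω Y)),
      (∀ B : Set Ω, MeasurableSet B → E B = S.comp ((Fop Ω Y B).comp T)) := by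
  classical
  -- the vector measure attached to a point
  set m : X → Set Ω → Y := fun x A => if MeasurableSet A then E A x else 0 with hm
  have hVM : ∀ x, VM (m x) := by
    intro x B hB hd
    have hU : MeasurableSet (⋃ i, B i) := MeasurableSet.iUnion hB
    have hv : ∀ i, m x (B i) = E (B i) x := fun i => by rw [hm]; simp [hB i]
    have hvU : m x (⋃ i, B i) = E (⋃ i, B i) x := by rw [hm]; simp [hU]
    simp only [hv, hvU]
    exact hE B hB hd x
  -- uniform boundedness
  obtain ⟨C, hC⟩ : ∃ C : ℝ, ∀ b : {B : Set Ω // MeasurableSet B}, ‖E b.1‖ ≤ C := by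
    apply banach_steinhaus
    intro x
    obtain ⟨M, hM⟩ := (hVM x).bounded
    refine ⟨M, fun b => ?_⟩
    have := hM b.1 b.2
    simp only [hm] at this
    rwa [if_pos b.2] at this
  have hC0 : 0 ≤ C := le_trans (norm_nonneg _) (hC ⟨Set.univ, MeasurableSet.univ⟩)
  -- the bounded function attached to a point
  have hmbdd : ∀ x : X, ∀ A : Set Ω, ‖m x A‖ ≤ C * ‖x‖ := by
    intro x A
    simp only [hm]
    by_cases hA : MeasurableSet A
    · rw [if_pos hA]
      calc ‖E A x‖ ≤ ‖E A‖ * ‖x‖ := (E A).le_opNorm x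
      _ ≤ C * ‖x‖ := by
        apply mul_le_mul_of_nonneg_right _ (norm_nonneg x)
        exact hC ⟨A, hA⟩
    · rw [if_neg hA]
      simpa using mul_nonneg hC0 (norm_nonneg x)
  set Tf : X → BoundedContinuousFunction (SetO Ω) Y :=
    fun x => mkBCF (m x) (C * ‖x‖) (hmbdd x) with hTf
  have hTfapply : ∀ (x : X) (A : Set Ω), Tf x A = m x A := fun x A => rfl
  have hTmem : ∀ x, Tf x ∈ ZS Ω Y :=
    fun x => ⟨fun A hA => by rw [hTfapply]; simp only [hm]; simp [hA], hVM x⟩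
  -- the operator T
  set T : X →L[ℂ] ↥(ZS Ω Y) := LinearMap.mkContinuous
    { toFun := fun x => (⟨Tf x, hTmem x⟩ : ↥(ZS Ω Y))
      map_add' := fun x y => by
        apply Subtype.ext
        simp only [Submodule.coe_add]
        apply BoundedContinuousFunction.ext
        intro A
        have key : ∀ A : Set Ω, Tf (x + y) A = Tf x A + Tf y A := by
          intro A
          rw [hTfapply, hTfapply, hTfapply]
          simp only [hm]
          by_cases hA : MeasurableSet A
          · simp [hA]
          · simp [hA]
        rw [BoundedContinuousFunction.add_apply]
        exact key A
      map_smul' := fun c x => by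
        apply Subtype.ext
        simp only [Submodule.coe_smul, RingHom.id_apply]
        apply BoundedContinuousFunction.ext
        intro A
        have key : ∀ A : Set Ω, Tf (c • x) A = c • Tf x A := by
          intro A
          rw [hTfapply, hTfapply]
          simp only [hm]
          by_cases hA : MeasurableSet A
          · simp [hA]
          · simp [hA]
        rw [BoundedContinuousFunction.smul_apply]
        exact key A }
    C (fun x => by
      rw [Submodule.coe_norm]
      change ‖Tf x‖ ≤ C * ‖x‖
      rw [hTf]
      exact BoundedContinuousFunction.norm_ofNormedAddCommGroup_le _
        (mul_nonneg hC0 (norm_nonneg x)) _) with hT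
  -- the operator S
  set S : ↥(ZS Ω Y) →L[ℂ] Y := LinearMap.mkContinuous
    { toFun := fun μ => μ.1 ((Set.univ : Set Ω))
      map_add' := fun μ ν => by
        simp only [Submodule.coe_add]
        rfl
      map_smul' := fun c μ => by
        simp only [Submodule.coe_smul, RingHom.id_apply]
        rfl }
    1 (fun μ => by
      rw [one_mul, Submodule.coe_norm]
      exact BoundedContinuousFunction.norm_coe_le_norm μ.1 _) with hS
  refine ⟨S, T, fun B hB => ?_⟩
  apply ContinuousLinearMap.ext
  intro x
  rw [ContinuousLinearMap.comp_apply, ContinuousLinearMap.comp_apply]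
  have h1 : (S ((Fop Ω Y B) (T x))) = (resBCF B (Tf x)) ((Set.univ : Set Ω)) := by
    rw [hS]
    change ((Fop Ω Y B) (T x)).1 ((Set.univ : Set Ω)) = _
    rw [Fop_apply hB]
    rfl
  rw [h1, resBCF_apply, if_pos MeasurableSet.univ, Set.univ_inter, hTfapply]
  simp only [hm]
  rw [if_pos hB]

end OVMDil

/-- **The general dilation theorem for operator-valued measures** (Han–Larson–Liu–Liu).
Every operator-valued measure `E : Σ → B(X,Y)` between complex Banach spaces dilates to
a projection-valued probability measure `F : Σ → B(Z)` on some complex Banach space `Z`: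
`E(B) = S ∘ F(B) ∘ T` for bounded operators `T : X → Z` and `S : Z → Y`. -/
theorem ovm_dilation_to_projection_valued_measure
    {Ω : Type w} [MeasurableSpace Ω]
    {X : Type u} [NormedAddCommGroup X] [NormedSpace ℂ X] [CompleteSpace X]
    {Y : Type v} [NormedAddCommGroup Y] [NormedSpace ℂ Y] [CompleteSpace Y]
    (E : Set Ω → (X →L[ℂ] Y)) (hE : IsOperatorValuedMeasure E) :
    ∃ (Z : Type (max u v w)) (_ : NormedAddCommGroup Z) (_ : NormedSpace ℂ Z)
      (_ : CompleteSpace Z)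
      (S : Z →L[ℂ] Y) (T : X →L[ℂ] Z) (F : Set Ω → (Z →L[ℂ] Z)),
      IsOperatorValuedMeasure F ∧
      F Set.univ = ContinuousLinearMap.id ℂ Z ∧
      (∀ B : Set Ω, MeasurableSet B → (F B).comp (F B) = F B) ∧
      (∀ B : Set Ω, MeasurableSet B → E B = S.comp ((F B).comp T)) := by
  classical
  haveI : CompleteSpace ↥(OVMDil.ZS Ω Y) := OVMDil.ZS_closed.isComplete.completeSpace_coe
  obtain ⟨S₀, T₀, hfact⟩ := OVMDil.ovm_dilation_aux E hE
  set Z : Type (max u v w) := ULift.{max u v w} ↥(OVMDil.ZS Ω Y) with hZ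
  set e : Z ≃L[ℂ] ↥(OVMDil.ZS Ω Y) := ContinuousLinearEquiv.ulift with he
  refine ⟨Z, inferInstance, inferInstance, inferInstance,
    S₀.comp (e : Z →L[ℂ] ↥(OVMDil.ZS Ω Y)),
    ((e.symm : ↥(OVMDil.ZS Ω Y) →L[ℂ] Z)).comp T₀,
    fun B => ((e.symm : ↥(OVMDil.ZS Ω Y) →L[ℂ] Z)).comp
      ((OVMDil.Fop Ω Y B).comp (e : Z →L[ℂ] ↥(OVMDil.ZS Ω Y))),
    ?_, ?_, ?_, ?_⟩
  · -- operator-valued measure property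
    intro B hB hd x
    simp only [ContinuousLinearMap.comp_apply]
    have h1 := OVMDil.Fop_ovm B hB hd (e x)
    exact ((e.symm : ↥(OVMDil.ZS Ω Y) →L[ℂ] Z)).hasSum h1
  · -- F univ = id
    show ((e.symm : ↥(OVMDil.ZS Ω Y) →L[ℂ] Z)).comp
      ((OVMDil.Fop Ω Y Set.univ).comp (e : Z →L[ℂ] ↥(OVMDil.ZS Ω Y))) = _
    rw [OVMDil.Fop_univ]
    apply ContinuousLinearMap.ext
    intro x
    simp
  · -- idempotency
    intro B hB
    apply ContinuousLinearMap.ext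
    intro x
    simp only [ContinuousLinearMap.comp_apply, ContinuousLinearMap.coe_coe,
      ContinuousLinearEquiv.apply_symm_apply]
    congr 1
    exact ContinuousLinearMap.ext_iff.mp (OVMDil.Fop_idem hB) (e x)
  · -- factorization
    intro B hB
    apply ContinuousLinearMap.ext
    intro x
    rw [hfact B hB]
    simp [ContinuousLinearMap.comp_apply]
end

section
/- In H = L²([0,1], ℂ), define for each n ∈ ℤ the functions x_n(t) = e^{2πint}·t^{-1/4} and y_n(t) = e^{2πint}·t^{1/4} (both lie in L²([0,1])). Then (x_n, y_n)_{n∈ℤ} is not a framing for H: for f(t) = t^{-1/4} ∈ L²([0,1]), the family (⟨f, x_n⟩·y_n)_{n∈ℤ} is not summable in L²([0,1]) (equivalently, the series ∑_{n∈ℤ} ⟨f, x_n⟩ y_n does not converge unconditionally). -/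
open MeasureTheory
open scoped ENNReal Real

noncomputable section

/-- Lebesgue measure restricted to `[0,1]`. -/
def mu01 : Measure ℝ := volume.restrict (Set.Icc (0 : ℝ) 1)

section Aux
open intervalIntegral
set_option linter.unusedTactic false


noncomputable section

def phi (u : ℝ) : ℝ := Real.cos (2*π*u) * u ^ (-(1/2) : ℝ)

lemma phi_intable (a b : ℝ) : IntervalIntegrable phi volume a b :=
  (intervalIntegrable_rpow' (by norm_num)).continuousOn_mul
    (Continuous.continuousOn (by continuity))

lemma integral_cos2pi (a b : ℝ) :
    ∫ u in a..b, Real.cos (2*π*u) = (2*π)⁻¹ * (Real.sin (2*π*b) - Real.sin (2*π*a)) := by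
  have h : (2*π) ≠ 0 := by positivity
  rw [integral_comp_mul_left (fun u => Real.cos u) h, integral_cos, smul_eq_mul]

lemma sin_shift (k : ℤ) (c : ℝ) : Real.sin (2*π*((k:ℝ) + c)) = Real.sin (2*π*c) := by
  rw [show 2*π*((k:ℝ) + c) = 2*π*c + (k:ℤ) * (2*π) by push_cast; ring,
    Real.sin_add_int_mul_two_pi]

lemma period_nonneg (k : ℤ) (hk : 1 ≤ k) :
    0 ≤ ∫ u in ((k:ℝ) - 1/4)..((k:ℝ) + 3/4), phi u := by
  have hk4 : (0:ℝ) < (k:ℝ) + 1/4 := by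
    have : (1:ℝ) ≤ (k:ℝ) := by exact_mod_cast hk
    linarith
  set c : ℝ := ((k:ℝ) + 1/4) ^ (-(1/2) : ℝ) with hc
  have hcpos : 0 ≤ c := Real.rpow_nonneg hk4.le _
  have key : ∀ u ∈ Set.Icc ((k:ℝ) - 1/4) ((k:ℝ) + 3/4), c * Real.cos (2*π*u) ≤ phi u := by
    intro u hu
    have hupos : (0:ℝ) < u := by
      have : (1:ℝ) ≤ (k:ℝ) := by exact_mod_cast hk
      have := hu.1; linarith
    have hcos : Real.cos (2*π*u) = Real.cos (2*π*(u - (k:ℝ))) := by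
      rw [show 2*π*u = 2*π*(u - (k:ℝ)) + (k:ℤ) * (2*π) by push_cast; ring,
        Real.cos_add_int_mul_two_pi]
    rcases le_total u ((k:ℝ) + 1/4) with h | h
    · have hcosnn : 0 ≤ Real.cos (2*π*u) := by
        rw [hcos]
        apply Real.cos_nonneg_of_mem_Icc
        constructor
        · nlinarith [hu.1, Real.pi_pos]
        · nlinarith [Real.pi_pos]
      have hw : c ≤ u ^ (-(1/2) : ℝ) :=
        Real.rpow_le_rpow_of_nonpos hupos h (by norm_num)
      calc c * Real.cos (2*π*u) = Real.cos (2*π*u) * c := by ring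
        _ ≤ Real.cos (2*π*u) * (u ^ (-(1/2):ℝ)) := by
            exact mul_le_mul_of_nonneg_left hw hcosnn
        _ = phi u := rfl
    · have hcosnp : Real.cos (2*π*u) ≤ 0 := by
        rw [hcos]
        apply Real.cos_nonpos_of_pi_div_two_le_of_le
        · nlinarith [Real.pi_pos]
        · nlinarith [hu.2, Real.pi_pos]
      have hw : u ^ (-(1/2) : ℝ) ≤ c :=
        Real.rpow_le_rpow_of_nonpos hk4 h (by norm_num)
      calc c * Real.cos (2*π*u) = Real.cos (2*π*u) * c := by ring
        _ ≤ Real.cos (2*π*u) * (u ^ (-(1/2):ℝ)) := mul_le_mul_of_nonpos_left hw hcosnp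
        _ = phi u := rfl
  have hle : ((k:ℝ) - 1/4) ≤ ((k:ℝ) + 3/4) := by linarith
  have hint1 : IntervalIntegrable (fun u => c * Real.cos (2*π*u)) volume
      ((k:ℝ) - 1/4) ((k:ℝ) + 3/4) := (Continuous.intervalIntegrable (by continuity) _ _)
  have hmono := intervalIntegral.integral_mono_on hle hint1
    (phi_intable _ _) key
  have hval : ∫ u in ((k:ℝ) - 1/4)..((k:ℝ) + 3/4), c * Real.cos (2*π*u) = 0 := by
    rw [intervalIntegral.integral_const_mul, integral_cos2pi,
      show (k:ℝ) + 3/4 = ((k+1 : ℤ):ℝ) + (-(1/4)) by push_cast; ring, sin_shift,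
      show (k:ℝ) - 1/4 = ((k : ℤ):ℝ) + (-(1/4)) by push_cast; ring, sin_shift]
    ring
  linarith [hmono, hval.ge]

end
noncomputable section
lemma tail_nonneg (n : ℤ) (hn : 1 ≤ n) :
    0 ≤ ∫ u in ((n:ℝ) - 1/4)..(n:ℝ), phi u := by
  apply intervalIntegral.integral_nonneg (by linarith)
  intro u hu
  have hupos : (0:ℝ) ≤ u := by
    have : (1:ℝ) ≤ (n:ℝ) := by exact_mod_cast hn
    have := hu.1; linarith
  have hcos : Real.cos (2*π*u) = Real.cos (2*π*(u - (n:ℝ))) := by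
    rw [show 2*π*u = 2*π*(u - (n:ℝ)) + (n:ℤ) * (2*π) by ring,
      Real.cos_add_int_mul_two_pi]
  have : 0 ≤ Real.cos (2*π*u) := by
    rw [hcos]
    apply Real.cos_nonneg_of_mem_Icc
    constructor
    · nlinarith [hu.1, Real.pi_pos]
    · nlinarith [hu.2, Real.pi_pos]
  exact mul_nonneg this (Real.rpow_nonneg hupos _)

lemma G_min (k : ℕ) :
    (∫ u in (0:ℝ)..(3/4 : ℝ), phi u) ≤ ∫ u in (0:ℝ)..((k:ℝ) + 3/4), phi u := by
  induction k with
  | zero => simp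
  | succ m ih =>
    have hadj := intervalIntegral.integral_add_adjacent_intervals
      (phi_intable 0 ((m:ℝ) + 3/4)) (phi_intable ((m:ℝ) + 3/4) (((m:ℕ)+1:ℕ) + 3/4))
    have hper : 0 ≤ ∫ u in ((m:ℝ) + 3/4)..(((m:ℕ)+1:ℕ) + 3/4 : ℝ), phi u := by
      have := period_nonneg ((m:ℤ)+1) (by linarith)
      have e1 : (((m:ℤ):ℝ) + 1) - 1/4 = (m:ℝ) + 3/4 := by push_cast; ring
      have e2 : (((m:ℤ):ℝ) + 1) + 3/4 = (((m:ℕ)+1:ℕ) : ℝ) + 3/4 := by push_cast; ring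
      rwa [show ((((m:ℤ)+1 : ℤ)):ℝ) = ((m:ℤ):ℝ) + 1 by push_cast; ring, e1, e2] at this
    calc (∫ u in (0:ℝ)..(3/4:ℝ), phi u) ≤ ∫ u in (0:ℝ)..((m:ℝ) + 3/4), phi u := ih
      _ ≤ (∫ u in (0:ℝ)..((m:ℝ) + 3/4), phi u) +
          ∫ u in ((m:ℝ) + 3/4)..((((m:ℕ)+1:ℕ)) + 3/4 : ℝ), phi u := by linarith
      _ = _ := hadj

lemma G_pos_at_n (n : ℕ) (hn : 1 ≤ n) :
    (∫ u in (0:ℝ)..(3/4 : ℝ), phi u) ≤ ∫ u in (0:ℝ)..(n:ℝ), phi u := by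
  obtain ⟨m, rfl⟩ := Nat.exists_eq_add_of_le hn
  have hadj := intervalIntegral.integral_add_adjacent_intervals
    (phi_intable 0 ((m:ℝ) + 3/4)) (phi_intable ((m:ℝ) + 3/4) ((1+m : ℕ):ℝ))
  have htail : 0 ≤ ∫ u in ((m:ℝ) + 3/4)..((1+m:ℕ):ℝ), phi u := by
    have := tail_nonneg ((m:ℤ)+1) (by linarith)
    have e1 : (((m:ℤ)+1:ℤ):ℝ) - 1/4 = (m:ℝ) + 3/4 := by push_cast; ring
    have e2 : (((m:ℤ)+1:ℤ):ℝ) = ((1+m:ℕ):ℝ) := by push_cast; ring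
    rwa [e1, e2] at this
  calc (∫ u in (0:ℝ)..(3/4:ℝ), phi u) ≤ ∫ u in (0:ℝ)..((m:ℝ) + 3/4), phi u := G_min m
    _ ≤ _ := by linarith [hadj]
end
noncomputable section

lemma quarter_rpow_half : ((1/4 : ℝ)) ^ ((1/2) : ℝ) = 1/2 := by
  rw [show (1/4:ℝ) = (1/2)^(2:ℕ) by norm_num, ← Real.rpow_natCast ((1/2):ℝ) 2,
    ← Real.rpow_mul (by norm_num)]
  norm_num

lemma quarter_rpow_fivehalf : ((1/4 : ℝ)) ^ ((5/2) : ℝ) = 1/32 := by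
  rw [show (1/4:ℝ) = (1/2)^(2:ℕ) by norm_num, ← Real.rpow_natCast ((1/2):ℝ) 2,
    ← Real.rpow_mul (by norm_num)]
  have h5 : ((2:ℕ):ℝ) * (5/2) = ((5:ℕ):ℝ) := by push_cast; ring
  rw [h5, Real.rpow_natCast]
  norm_num

lemma partA : 1 - π^2/40 ≤ ∫ u in (0:ℝ)..(1/4 : ℝ), phi u := by
  have hint1 : IntervalIntegrable (fun u : ℝ => u ^ (-(1/2):ℝ) - 2*π^2 * u ^ ((3/2):ℝ))
      volume 0 (1/4) :=
    (intervalIntegrable_rpow' (by norm_num)).sub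
      ((intervalIntegrable_rpow' (by norm_num)).const_mul _)
  have key : ∀ u ∈ Set.Icc (0:ℝ) (1/4),
      u ^ (-(1/2):ℝ) - 2*π^2 * u ^ ((3/2):ℝ) ≤ phi u := by
    intro u hu
    have hu0 : 0 ≤ u := hu.1
    rcases eq_or_lt_of_le hu0 with rfl | hpos
    · simp [phi, Real.zero_rpow]
    have hw : (0:ℝ) ≤ u ^ (-(1/2):ℝ) := Real.rpow_nonneg hu0 _
    have hcos : 1 - (2*π*u)^2/2 ≤ Real.cos (2*π*u) := Real.one_sub_sq_div_two_le_cos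
    have h32 : u ^ ((3/2):ℝ) = u^2 * u ^ (-(1/2):ℝ) := by
      rw [show (u:ℝ)^2 = u ^ ((2:ℕ):ℝ) by rw [Real.rpow_natCast],
        ← Real.rpow_add hpos]
      norm_num
    have : (1 - (2*π*u)^2/2) * u ^ (-(1/2):ℝ) ≤ phi u :=
      mul_le_mul_of_nonneg_right hcos hw
    calc u ^ (-(1/2):ℝ) - 2*π^2 * u ^ ((3/2):ℝ)
        = (1 - (2*π*u)^2/2) * u ^ (-(1/2):ℝ) := by rw [h32]; ring
      _ ≤ phi u := this
  have hmono := intervalIntegral.integral_mono_on (by norm_num) hint1 (phi_intable _ _) key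
  have hval : ∫ u in (0:ℝ)..(1/4:ℝ), (u ^ (-(1/2):ℝ) - 2*π^2 * u ^ ((3/2):ℝ))
      = 1 - π^2/40 := by
    rw [intervalIntegral.integral_sub (intervalIntegrable_rpow' (by norm_num))
        ((intervalIntegrable_rpow' (by norm_num)).const_mul _),
      intervalIntegral.integral_const_mul, integral_rpow (Or.inl (by norm_num)),
      integral_rpow (Or.inl (by norm_num))]
    rw [show (-(1/2)+1 : ℝ) = 1/2 by norm_num, show ((3:ℝ)/2+1:ℝ) = 5/2 by norm_num,
      Real.zero_rpow (by norm_num), Real.zero_rpow (by norm_num),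
      quarter_rpow_half, quarter_rpow_fivehalf]
    ring
  linarith [hmono, hval.le]

lemma partB : -(2/π) ≤ ∫ u in (1/4 : ℝ)..(3/4 : ℝ), phi u := by
  have key : ∀ u ∈ Set.Icc (1/4:ℝ) (3/4), 2 * Real.cos (2*π*u) ≤ phi u := by
    intro u hu
    have hpos : (0:ℝ) < u := by have := hu.1; linarith
    have hcosnp : Real.cos (2*π*u) ≤ 0 := by
      apply Real.cos_nonpos_of_pi_div_two_le_of_le
      · nlinarith [hu.1, Real.pi_pos]
      · nlinarith [hu.2, Real.pi_pos]
    have hw : u ^ (-(1/2):ℝ) ≤ 2 := by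
      have := Real.rpow_le_rpow_of_nonpos (by norm_num : (0:ℝ) < 1/4) hu.1
        (by norm_num : (-(1/2):ℝ) ≤ 0)
      calc u ^ (-(1/2):ℝ) ≤ (1/4:ℝ) ^ (-(1/2):ℝ) := this
        _ = 2 := by
          rw [Real.rpow_neg (by norm_num), quarter_rpow_half]; norm_num
    calc 2 * Real.cos (2*π*u) = Real.cos (2*π*u) * 2 := by ring
      _ ≤ Real.cos (2*π*u) * u ^ (-(1/2):ℝ) := mul_le_mul_of_nonpos_left hw hcosnp
      _ = phi u := rfl
  have hint1 : IntervalIntegrable (fun u : ℝ => 2 * Real.cos (2*π*u)) volume (1/4) (3/4) :=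
    Continuous.intervalIntegrable (by continuity) _ _
  have hmono := intervalIntegral.integral_mono_on (by norm_num) hint1 (phi_intable _ _) key
  have hval : ∫ u in (1/4:ℝ)..(3/4:ℝ), 2 * Real.cos (2*π*u) = -(2/π) := by
    rw [intervalIntegral.integral_const_mul, integral_cos2pi]
    have h1 : Real.sin (2*π*(3/4:ℝ)) = -1 := by
      rw [show 2*π*(3/4:ℝ) = -(π/2) + (1:ℤ)*(2*π) by push_cast; ring,
        Real.sin_add_int_mul_two_pi, Real.sin_neg, Real.sin_pi_div_two]
    have h2 : Real.sin (2*π*(1/4:ℝ)) = 1 := by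
      rw [show 2*π*(1/4:ℝ) = π/2 by ring, Real.sin_pi_div_two]
    rw [h1, h2]
    field_simp
    ring
  linarith [hmono, hval.le]

lemma G34 : (1/10 : ℝ) ≤ ∫ u in (0:ℝ)..(3/4 : ℝ), phi u := by
  have hadj := intervalIntegral.integral_add_adjacent_intervals
    (phi_intable 0 (1/4)) (phi_intable (1/4) (3/4))
  have hA := partA
  have hB := partB
  have hpi1 : π < 3.1416 := Real.pi_lt_d6.trans (by norm_num)
  have hpi2 : 3.1415 < π := by linarith [Real.pi_gt_d6]
  have hnum : (1/10 : ℝ) ≤ 1 - π^2/40 - 2/π := by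
    have hpos : (0:ℝ) < π := Real.pi_pos
    have h3 : 2/π ≤ 0.6367 := by rw [div_le_iff₀ hpos]; nlinarith
    have h4 : π^2 ≤ 9.8697 := by nlinarith
    linarith
  linarith [hadj.symm.le, hadj.le]

lemma key_lower (n : ℕ) (hn : 1 ≤ n) :
    (1/10 : ℝ) * ((n:ℝ) ^ (-(1/2):ℝ)) ≤ ∫ t in (0:ℝ)..1, Real.cos (2*π*(n:ℝ)*t) * t ^ (-(1/2):ℝ) := by
  have hnpos : (0:ℝ) < (n:ℝ) := by exact_mod_cast hn
  -- substitution t = u/n : ∫_0^1 cos(2πnt) t^{-1/2} dt = n^{-1/2} ∫_0^n phi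
  have hGn : (1/10 : ℝ) ≤ ∫ u in (0:ℝ)..(n:ℝ), phi u := G34.trans (G_pos_at_n n hn)
  have hn12pos : (0:ℝ) < (n:ℝ) ^ (-(1/2):ℝ) := Real.rpow_pos_of_pos hnpos _
  have hcomp := intervalIntegral.integral_comp_mul_left
    (fun u => Real.cos (2*π*u) * (u / (n:ℝ)) ^ (-(1/2):ℝ)) (ne_of_gt hnpos) (a := 0) (b := 1)
  have hlhs : (∫ t in (0:ℝ)..1, Real.cos (2*π*(n:ℝ)*t) * t ^ (-(1/2):ℝ))
      = ∫ t in (0:ℝ)..1, Real.cos (2*π*((n:ℝ)*t)) * (((n:ℝ)*t) / (n:ℝ)) ^ (-(1/2):ℝ) := by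
    apply intervalIntegral.integral_congr
    intro t ht
    dsimp only
    rw [show 2*π*((n:ℝ)*t) = 2*π*(n:ℝ)*t by ring, mul_comm (n:ℝ) t, mul_div_assoc,
      div_self (ne_of_gt hnpos), mul_one]
  have hrhs : (∫ u in ((n:ℝ)*0)..((n:ℝ)*1), Real.cos (2*π*u) * (u / (n:ℝ)) ^ (-(1/2):ℝ))
      = (n:ℝ) ^ ((1/2):ℝ) * ∫ u in (0:ℝ)..(n:ℝ), phi u := by
    rw [mul_zero, mul_one, ← intervalIntegral.integral_const_mul]
    apply intervalIntegral.integral_congr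
    intro u hu
    have hu0 : 0 ≤ u := by
      rcases hu with hu
      rw [Set.uIcc_of_le (by positivity)] at hu
      exact hu.1
    dsimp only
    simp only [phi]
    rw [Real.div_rpow hu0 hnpos.le, Real.rpow_neg hnpos.le]
    field_simp
  have hmain : (∫ t in (0:ℝ)..1, Real.cos (2*π*(n:ℝ)*t) * t ^ (-(1/2):ℝ))
      = (n:ℝ) ^ (-(1/2):ℝ) * ∫ u in (0:ℝ)..(n:ℝ), phi u := by
    rw [hlhs, hcomp, hrhs, smul_eq_mul, ← mul_assoc]
    congr 1
    rw [← Real.rpow_neg_one (n:ℝ), ← Real.rpow_add hnpos]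
    norm_num
  rw [hmain]
  calc (1/10 : ℝ) * ((n:ℝ) ^ (-(1/2):ℝ)) = (n:ℝ) ^ (-(1/2):ℝ) * (1/10) := by ring
    _ ≤ (n:ℝ) ^ (-(1/2):ℝ) * ∫ u in (0:ℝ)..(n:ℝ), phi u :=
        mul_le_mul_of_nonneg_left hGn hn12pos.le

end

end Aux

section HilbertAux
open Finset

lemma bounded_partial_sums {ι E : Type*} [DecidableEq ι] [NormedAddCommGroup E] [CompleteSpace E]
    {g : ι → E} (hg : Summable g) : ∃ B : ℝ, ∀ F : Finset ι, ‖∑ n ∈ F, g n‖ ≤ B := by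
  rw [summable_iff_vanishing] at hg
  obtain ⟨s, hs⟩ := hg (Metric.ball 0 1) (Metric.ball_mem_nhds 0 one_pos)
  refine ⟨(∑ n ∈ s, ‖g n‖) + 1, fun F => ?_⟩
  have hsplit : ∑ n ∈ F, g n = (∑ n ∈ F ∩ s, g n) + ∑ n ∈ F \ s, g n :=
    (Finset.sum_inter_add_sum_sdiff F s g).symm
  have h1 : ‖∑ n ∈ F ∩ s, g n‖ ≤ ∑ n ∈ s, ‖g n‖ :=
    (norm_sum_le _ _).trans (Finset.sum_le_sum_of_subset_of_nonneg
      Finset.inter_subset_right (fun _ _ _ => norm_nonneg _))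
  have h2 : ‖∑ n ∈ F \ s, g n‖ ≤ 1 := by
    have h3 := hs (F \ s) Finset.sdiff_disjoint
    rw [Metric.mem_ball, dist_zero_right] at h3
    exact h3.le
  calc ‖∑ n ∈ F, g n‖ = ‖(∑ n ∈ F ∩ s, g n) + ∑ n ∈ F \ s, g n‖ := by rw [← hsplit]
    _ ≤ ‖∑ n ∈ F ∩ s, g n‖ + ‖∑ n ∈ F \ s, g n‖ := norm_add_le _ _
    _ ≤ (∑ n ∈ s, ‖g n‖) + 1 := add_le_add h1 h2

lemma exists_signed_subsum {ι E : Type*} [DecidableEq ι] [NormedAddCommGroup E]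
    [InnerProductSpace ℂ E] (a : ι → E) (F : Finset ι) :
    ∃ s ⊆ F, ∑ n ∈ F, ‖a n‖^2 ≤ ‖(∑ n ∈ s, a n) - ∑ n ∈ F \ s, a n‖^2 := by
  induction F using Finset.induction_on with
  | empty => exact ⟨∅, by simp⟩
  | @insert i F hi ih =>
    obtain ⟨s, hsF, hs⟩ := ih
    set u := (∑ n ∈ s, a n) - ∑ n ∈ F \ s, a n with hu
    have hpar := parallelogram_law_with_norm ℂ u (a i)
    have hiF : i ∉ s := fun h => hi (hsF h)
    have hsum : ∑ n ∈ insert i F, ‖a n‖^2 = ‖a i‖^2 + ∑ n ∈ F, ‖a n‖^2 :=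
      Finset.sum_insert hi
    rcases le_total (‖u - a i‖) (‖u + a i‖) with h | h
    · refine ⟨insert i s, Finset.insert_subset_insert i hsF, ?_⟩
      have e1 : ∑ n ∈ insert i s, a n = a i + ∑ n ∈ s, a n := Finset.sum_insert hiF
      have e2 : (insert i F) \ (insert i s) = F \ s := by
        ext b
        by_cases hb : b = i
        · subst hb; simp [hi]
        · simp [Finset.mem_sdiff, Finset.mem_insert, hb]
      rw [e1, e2]
      have e4 : (a i + ∑ n ∈ s, a n) - ∑ n ∈ F \ s, a n = u + a i := by rw [hu]; abel
      rw [e4, hsum]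
      have hh := mul_self_le_mul_self (norm_nonneg (u - a i)) h
      nlinarith [hpar, hs, hh]
    · refine ⟨s, hsF.trans (Finset.subset_insert i F), ?_⟩
      have e2 : (insert i F) \ s = insert i (F \ s) :=
        Finset.insert_sdiff_of_notMem _ hiF
      have e3 : ∑ n ∈ insert i (F \ s), a n = a i + ∑ n ∈ F \ s, a n :=
        Finset.sum_insert (by simp [hi])
      rw [e2, e3]
      have e4 : (∑ n ∈ s, a n) - (a i + ∑ n ∈ F \ s, a n) = u - a i := by rw [hu]; abel
      rw [e4, hsum]
      have hh := mul_self_le_mul_self (norm_nonneg (u + a i)) h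
      nlinarith [hpar, hs, hh]

end HilbertAux

section MAux

lemma mu01_ae_mem : ∀ᵐ t ∂mu01, t ∈ Set.Ioc (0:ℝ) 1 := by
  have h1 : ∀ᵐ t ∂mu01, t ∈ Set.Icc (0:ℝ) 1 := ae_restrict_mem measurableSet_Icc
  have h2 : ∀ᵐ t ∂mu01, t ≠ 0 := by
    rw [ae_iff]
    have : {t : ℝ | ¬ t ≠ 0} = {0} := by ext t; simp
    rw [this]
    exact measure_mono_null (fun t ht => ht) <|
      le_antisymm ((Measure.restrict_le_self (s := Set.Icc (0:ℝ) 1) _).trans_eq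
        (Real.volume_singleton)) (by simp)
  filter_upwards [h1, h2] with t ht hne
  exact ⟨lt_of_le_of_ne ht.1 (Ne.symm hne), ht.2⟩

lemma integrable_rpow_mu01 {r : ℝ} (hr : -1 < r) :
    Integrable (fun t : ℝ => t ^ r) mu01 := by
  have h := (intervalIntegral.intervalIntegrable_rpow' (a := 0) (b := 1) hr)
  rw [intervalIntegrable_iff_integrableOn_Ioc_of_le (by norm_num)] at h
  have : IntegrableOn (fun t : ℝ => t ^ r) (Set.Icc 0 1) volume := by
    rwa [integrableOn_Icc_iff_integrableOn_Ioc]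
  exact this

lemma integral_mu01_eq {g : ℝ → ℝ} : ∫ t, g t ∂mu01 = ∫ t in (0:ℝ)..1, g t := by
  rw [show mu01 = volume.restrict (Set.Icc (0:ℝ) 1) from rfl,
    MeasureTheory.integral_Icc_eq_integral_Ioc, intervalIntegral.integral_of_le (by norm_num)]

lemma inner_re_eq (n : ℤ) (X F : Lp ℂ 2 mu01)
    (hx : (X : ℝ → ℂ) =ᵐ[mu01]
      fun t => Complex.exp (2 * Real.pi * Complex.I * (n : ℂ) * (t : ℂ)) *
        ((t ^ (-(1 / 4 : ℝ)) : ℝ) : ℂ))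
    (hf : (F : ℝ → ℂ) =ᵐ[mu01] fun t => ((t ^ (-(1 / 4 : ℝ)) : ℝ) : ℂ)) :
    (inner ℂ X F : ℂ).re = ∫ t in (0:ℝ)..1, Real.cos (2*π*(n:ℝ)*t) * t ^ (-(1/2) : ℝ) := by
  have hinner : (inner ℂ X F : ℂ) = ∫ t, (starRingEnd ℂ) (X t) * F t ∂mu01 := by
    rw [MeasureTheory.L2.inner_def]
    simp only [RCLike.inner_apply']
  have hcong : (fun t => (starRingEnd ℂ) (X t) * F t) =ᵐ[mu01]
      (fun t : ℝ => Complex.exp (-(2 * Real.pi * Complex.I * (n : ℂ) * (t : ℂ))) *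
        ((t ^ (-(1/2 : ℝ)) : ℝ) : ℂ)) := by
    filter_upwards [hx, hf, mu01_ae_mem] with t hxt hft ht
    rw [hxt, hft, map_mul]
    have hconj : (starRingEnd ℂ) (Complex.exp (2 * Real.pi * Complex.I * (n : ℂ) * (t : ℂ)))
        = Complex.exp (-(2 * Real.pi * Complex.I * (n : ℂ) * (t : ℂ))) := by
      rw [← Complex.exp_conj]
      congr 1
      simp only [map_mul, Complex.conj_I, Complex.conj_ofReal, map_intCast, map_ofNat]
      ring
    rw [hconj, Complex.conj_ofReal]
    have hrpow : ((t ^ (-(1/4 : ℝ)) : ℝ) : ℂ) * ((t ^ (-(1/4 : ℝ)) : ℝ) : ℂ)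
        = ((t ^ (-(1/2 : ℝ)) : ℝ) : ℂ) := by
      rw [← Complex.ofReal_mul, ← Real.rpow_add ht.1]
      norm_num
    rw [mul_assoc, mul_comm (((t ^ (-(1/4 : ℝ)) : ℝ) : ℂ)), mul_assoc, hrpow, ← mul_assoc]
  rw [hinner, integral_congr_ae hcong]
  have hint : Integrable (fun t : ℝ => Complex.exp (-(2 * Real.pi * Complex.I * (n : ℂ) * (t : ℂ))) *
      ((t ^ (-(1/2 : ℝ)) : ℝ) : ℂ)) mu01 := by
    apply Integrable.mono' (integrable_rpow_mu01 (by norm_num : (-1:ℝ) < -(1/2)))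
    · apply AEStronglyMeasurable.mul
      · exact Continuous.aestronglyMeasurable (by continuity)
      · exact Complex.continuous_ofReal.comp_aestronglyMeasurable
          (integrable_rpow_mu01 (by norm_num : (-1:ℝ) < -(1/2))).aestronglyMeasurable
    · filter_upwards [mu01_ae_mem] with t ht
      rw [norm_mul]
      have h1 : ‖Complex.exp (-(2 * Real.pi * Complex.I * (n : ℂ) * (t : ℂ)))‖ = 1 := by
        rw [Complex.norm_exp]
        have : (-(2 * Real.pi * Complex.I * (n : ℂ) * (t : ℂ))).re = 0 := by
          simp [Complex.mul_re, Complex.mul_im]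
        rw [this, Real.exp_zero]
      rw [h1, one_mul, Complex.norm_real, Real.norm_eq_abs,
        abs_of_nonneg (Real.rpow_nonneg ht.1.le _)]
  rw [show (∫ a : ℝ, Complex.exp (-(2 * Real.pi * Complex.I * (n : ℂ) * (a : ℂ))) *
      ((a ^ (-(1/2 : ℝ)) : ℝ) : ℂ) ∂mu01).re
      = RCLike.re (∫ a : ℝ, Complex.exp (-(2 * Real.pi * Complex.I * (n : ℂ) * (a : ℂ))) *
      ((a ^ (-(1/2 : ℝ)) : ℝ) : ℂ) ∂mu01) from rfl, ← integral_re hint]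
  rw [← integral_mu01_eq]
  apply integral_congr_ae
  filter_upwards [] with t
  have : Complex.exp (-(2 * Real.pi * Complex.I * (n : ℂ) * (t : ℂ)))
      = Complex.exp ((-(2 * π * n * t) : ℝ) * Complex.I) := by
    congr 1
    push_cast
    ring
  rw [this, RCLike.re_to_complex, Complex.mul_re, Complex.exp_ofReal_mul_I_re, Real.cos_neg]
  simp [Complex.ofReal_re, Complex.ofReal_im]

lemma norm_sq_y (n : ℤ) (Y : Lp ℂ 2 mu01)
    (hy : (Y : ℝ → ℂ) =ᵐ[mu01]
      fun t => Complex.exp (2 * Real.pi * Complex.I * (n : ℂ) * (t : ℂ)) *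
        ((t ^ ((1 / 4 : ℝ)) : ℝ) : ℂ)) :
    ‖Y‖^2 = 2/3 := by
  rw [@norm_sq_eq_re_inner ℂ]
  have hinner : (inner ℂ Y Y : ℂ) = ∫ t, (starRingEnd ℂ) (Y t) * Y t ∂mu01 := by
    rw [MeasureTheory.L2.inner_def]; simp only [RCLike.inner_apply']
  have hcong : (fun t => (starRingEnd ℂ) (Y t) * Y t) =ᵐ[mu01]
      (fun t : ℝ => ((t ^ ((1/2 : ℝ)) : ℝ) : ℂ)) := by
    filter_upwards [hy, mu01_ae_mem] with t hyt ht
    rw [hyt]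
    have habs : (starRingEnd ℂ) (Complex.exp (2 * Real.pi * Complex.I * (n : ℂ) * (t : ℂ))) *
        Complex.exp (2 * Real.pi * Complex.I * (n : ℂ) * (t : ℂ)) = 1 := by
      rw [← Complex.normSq_eq_conj_mul_self, ← Complex.sq_norm, Complex.norm_exp]
      have : (2 * Real.pi * Complex.I * (n : ℂ) * (t : ℂ)).re = 0 := by
        simp [Complex.mul_re, Complex.mul_im]
      rw [this, Real.exp_zero]
      norm_num
    have hrpow : ((t ^ ((1/4 : ℝ)) : ℝ) : ℂ) * ((t ^ ((1/4 : ℝ)) : ℝ) : ℂ)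
        = ((t ^ ((1/2 : ℝ)) : ℝ) : ℂ) := by
      rw [← Complex.ofReal_mul, ← Real.rpow_add ht.1]
      norm_num
    calc (starRingEnd ℂ) (Complex.exp (2 * Real.pi * Complex.I * (n : ℂ) * (t : ℂ)) *
          ((t ^ ((1/4 : ℝ)) : ℝ) : ℂ)) *
        (Complex.exp (2 * Real.pi * Complex.I * (n : ℂ) * (t : ℂ)) * ((t ^ ((1/4 : ℝ)) : ℝ) : ℂ))
        = ((starRingEnd ℂ) (Complex.exp (2 * Real.pi * Complex.I * (n : ℂ) * (t : ℂ))) *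
            Complex.exp (2 * Real.pi * Complex.I * (n : ℂ) * (t : ℂ))) *
          (((t ^ ((1/4 : ℝ)) : ℝ) : ℂ) * ((t ^ ((1/4 : ℝ)) : ℝ) : ℂ)) := by
          rw [map_mul, Complex.conj_ofReal]; ring
      _ = ((t ^ ((1/2 : ℝ)) : ℝ) : ℂ) := by rw [habs, hrpow, one_mul]
  rw [hinner, integral_congr_ae hcong]
  rw [show (fun t : ℝ => ((t ^ ((1/2:ℝ)) : ℝ) : ℂ)) = (fun t : ℝ => (RCLike.ofReal (t ^ ((1/2:ℝ)) : ℝ) : ℂ)) from rfl,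
    integral_ofReal]
  rw [RCLike.ofReal_re, integral_mu01_eq,
    integral_rpow (Or.inl (by norm_num : (-1:ℝ) < 1/2))]
  rw [Real.one_rpow, Real.zero_rpow (by norm_num)]
  norm_num

end MAux

section Main

variable {x y : ℤ → Lp ℂ 2 mu01} {f : Lp ℂ 2 mu01}

lemma core_contradiction (x : ℤ → Lp ℂ 2 mu01) (y : ℤ → Lp ℂ 2 mu01) (f : Lp ℂ 2 mu01)
    (hx : ∀ n : ℤ, (x n : ℝ → ℂ) =ᵐ[mu01]
      fun t => Complex.exp (2 * Real.pi * Complex.I * (n : ℂ) * (t : ℂ)) *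
        ((t ^ (-(1 / 4 : ℝ)) : ℝ) : ℂ))
    (hy : ∀ n : ℤ, (y n : ℝ → ℂ) =ᵐ[mu01]
      fun t => Complex.exp (2 * Real.pi * Complex.I * (n : ℂ) * (t : ℂ)) *
        ((t ^ ((1 / 4 : ℝ)) : ℝ) : ℂ))
    (hf : (f : ℝ → ℂ) =ᵐ[mu01] fun t => ((t ^ (-(1 / 4 : ℝ)) : ℝ) : ℂ))
    (B : ℝ)
    (hB : ∀ F : Finset ℤ, ‖∑ n ∈ F, (inner ℂ (x n) f : ℂ) • y n‖ ≤ B) : False := by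
  set a : ℤ → Lp ℂ 2 mu01 := fun n => (inner ℂ (x n) f : ℂ) • y n with ha
  -- uniform bound on the square sums
  have hsq : ∀ F : Finset ℤ, ∑ n ∈ F, ‖a n‖^2 ≤ (2*B)^2 := by
    intro F
    obtain ⟨s, hsF, hs⟩ := exists_signed_subsum a F
    have h1 : ‖(∑ n ∈ s, a n) - ∑ n ∈ F \ s, a n‖ ≤ 2*B := by
      calc ‖(∑ n ∈ s, a n) - ∑ n ∈ F \ s, a n‖
          ≤ ‖∑ n ∈ s, a n‖ + ‖∑ n ∈ F \ s, a n‖ := norm_sub_le _ _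
        _ ≤ B + B := add_le_add (hB s) (hB (F \ s))
        _ = 2*B := by ring
    have h0 : (0:ℝ) ≤ ‖(∑ n ∈ s, a n) - ∑ n ∈ F \ s, a n‖ := norm_nonneg _
    calc ∑ n ∈ F, ‖a n‖^2 ≤ ‖(∑ n ∈ s, a n) - ∑ n ∈ F \ s, a n‖^2 := hs
      _ ≤ (2*B)^2 := by nlinarith
  -- pointwise lower bound for positive indices
  have hlow : ∀ k : ℕ, (1/150 : ℝ) * (1/((k:ℝ)+1)) ≤ ‖a ((k:ℤ)+1)‖^2 := by
    intro k
    set n : ℤ := (k:ℤ)+1 with hn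
    have hn1 : 1 ≤ n := by omega
    have hnR : ((n:ℝ)) = (k:ℝ)+1 := by push_cast [hn]; ring
    have hnRpos : (0:ℝ) < (n:ℝ) := by rw [hnR]; positivity
    -- the real part of the inner product
    have hre : (1/10 : ℝ) * (((k:ℝ)+1) ^ (-(1/2):ℝ))
        ≤ (inner ℂ (x n) f : ℂ).re := by
      have hkey := key_lower (k+1) (by omega)
      have hcast : ((k+1 : ℕ):ℝ) = (k:ℝ)+1 := by push_cast; ring
      rw [hcast] at hkey
      have hre2 := inner_re_eq n (x n) f (hx n) hf
      rw [hre2, show ((n:ℝ)) = (k:ℝ)+1 from hnR]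
      exact hkey
    have hynorm : ‖y n‖^2 = 2/3 := norm_sq_y n (y n) (hy n)
    have hnorm : ‖a n‖^2 = ‖(inner ℂ (x n) f : ℂ)‖^2 * ‖y n‖^2 := by
      rw [ha]
      simp only [norm_smul, mul_pow]
    have habs : ((1/10 : ℝ) * (((k:ℝ)+1) ^ (-(1/2):ℝ)))^2 ≤ ‖(inner ℂ (x n) f : ℂ)‖^2 := by
      have h1 : |(inner ℂ (x n) f : ℂ).re| ≤ ‖(inner ℂ (x n) f : ℂ)‖ := by
        exact Complex.abs_re_le_norm _
      have h2 : (0:ℝ) ≤ (1/10 : ℝ) * (((k:ℝ)+1) ^ (-(1/2):ℝ)) := by positivity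
      have h3 : (1/10 : ℝ) * (((k:ℝ)+1) ^ (-(1/2):ℝ)) ≤ ‖(inner ℂ (x n) f : ℂ)‖ :=
        le_trans (le_trans hre (le_abs_self _)) h1
      nlinarith
    have hrpow2 : ((((k:ℝ)+1) ^ (-(1/2):ℝ)))^2 = 1/((k:ℝ)+1) := by
      rw [show ((((k:ℝ)+1) ^ (-(1/2):ℝ)))^2 = (((k:ℝ)+1) ^ (-(1/2):ℝ)) ^ ((2:ℕ):ℝ) from
        (Real.rpow_natCast _ 2).symm, ← Real.rpow_mul (by positivity)]
      norm_num
      rw [Real.rpow_neg_one]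
    have hstep : ((1/10 : ℝ) * (((k:ℝ)+1) ^ (-(1/2):ℝ)))^2 * (2/3)
        = (1/150 : ℝ) * (1/((k:ℝ)+1)) := by
      rw [mul_pow, hrpow2]; ring
    calc (1/150 : ℝ) * (1/((k:ℝ)+1))
        = ((1/10 : ℝ) * (((k:ℝ)+1) ^ (-(1/2):ℝ)))^2 * (2/3) := hstep.symm
      _ ≤ ‖(inner ℂ (x n) f : ℂ)‖^2 * (2/3) := by nlinarith
      _ = ‖a n‖^2 := by rw [hnorm, hynorm]
  -- summability contradiction
  have hg : ∀ N : ℕ, ∑ k ∈ Finset.range N, ‖a ((k:ℤ)+1)‖^2 ≤ (2*B)^2 := by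
    intro N
    have hinj : ∀ i ∈ Finset.range N, ∀ j ∈ Finset.range N,
        ((i:ℤ)+1) = ((j:ℤ)+1) → i = j := by intro i _ j _ hij; omega
    have := hsq ((Finset.range N).image (fun k : ℕ => (k:ℤ)+1))
    rwa [Finset.sum_image hinj] at this
  have hsummable : Summable (fun k : ℕ => ‖a ((k:ℤ)+1)‖^2) :=
    summable_of_sum_range_le (fun k => sq_nonneg _) hg
  have hsmall : Summable (fun k : ℕ => (1/150:ℝ)*(1/((k:ℝ)+1))) :=
    Summable.of_nonneg_of_le (fun k => by positivity) hlow hsummable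
  have h2 : Summable (fun k : ℕ => 1/((k:ℝ)+1)) :=
    (summable_mul_left_iff (by norm_num : (1/150:ℝ) ≠ 0)).mp hsmall
  have h3 : Summable (fun k : ℕ => 1/((k:ℕ):ℝ)) := by
    rw [← summable_nat_add_iff 1]
    apply h2.congr
    intro k
    push_cast
    ring
  exact Real.not_summable_one_div_natCast h3

/-- **A non-framing with pointwise reconstruction** (Han–Larson–Liu–Liu, Example).
In `H = L²([0,1], ℂ)` let `xₙ(t) = e^{2πint} t^{-1/4}` and `yₙ(t) = e^{2πint} t^{1/4}`
(`n ∈ ℤ`).  Then `(xₙ, yₙ)` is not a framing for `H`: for `f(t) = t^{-1/4} ∈ L²[0,1]`,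
the family `(⟨f, xₙ⟩ · yₙ)_{n ∈ ℤ}` is not summable in `L²[0,1]` (the series
`∑ₙ ⟨f, xₙ⟩ yₙ` does not converge unconditionally); in particular the reconstruction
property `v = ∑ₙ ⟨v, yₙ⟩ xₙ` cannot hold unconditionally for all `v ∈ H`. -/
theorem not_framing_of_power_weighted_exponentials
    (x y : ℤ → Lp ℂ 2 mu01) (f : Lp ℂ 2 mu01)
    (hx : ∀ n : ℤ, (x n : ℝ → ℂ) =ᵐ[mu01]
      fun t => Complex.exp (2 * Real.pi * Complex.I * (n : ℂ) * (t : ℂ)) *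
        ((t ^ (-(1 / 4 : ℝ)) : ℝ) : ℂ))
    (hy : ∀ n : ℤ, (y n : ℝ → ℂ) =ᵐ[mu01]
      fun t => Complex.exp (2 * Real.pi * Complex.I * (n : ℂ) * (t : ℂ)) *
        ((t ^ ((1 / 4 : ℝ)) : ℝ) : ℂ))
    (hf : (f : ℝ → ℂ) =ᵐ[mu01] fun t => ((t ^ (-(1 / 4 : ℝ)) : ℝ) : ℂ)) :
    ¬ Summable (fun n : ℤ => (inner ℂ (x n) f : ℂ) • y n) ∧
    ¬ (∀ v : Lp ℂ 2 mu01, HasSum (fun n : ℤ => (inner ℂ (y n) v : ℂ) • x n) v) := by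
  constructor
  · intro hsum
    obtain ⟨B, hB⟩ := bounded_partial_sums hsum
    exact core_contradiction x y f hx hy hf B hB
  · intro hrec
    set T : Finset ℤ → (Lp ℂ 2 mu01 →L[ℂ] Lp ℂ 2 mu01) :=
      fun F => ∑ n ∈ F, (innerSL ℂ (y n)).smulRight (x n) with hT
    have hTapp : ∀ (F : Finset ℤ) (v : Lp ℂ 2 mu01),
        T F v = ∑ n ∈ F, (inner ℂ (y n) v : ℂ) • x n := by
      intro F v
      rw [hT]
      simp only [ContinuousLinearMap.coe_sum', Finset.sum_apply,
        ContinuousLinearMap.smulRight_apply, innerSL_apply_apply]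
    have hpt : ∀ v : Lp ℂ 2 mu01, ∃ C : ℝ, ∀ F : Finset ℤ, ‖T F v‖ ≤ C := by
      intro v
      obtain ⟨C, hC⟩ := bounded_partial_sums (hrec v).summable
      exact ⟨C, fun F => by rw [hTapp]; exact hC F⟩
    obtain ⟨C', hC'⟩ := banach_steinhaus hpt
    have hC'0 : 0 ≤ C' := le_trans (norm_nonneg _) (hC' ∅)
    apply core_contradiction x y f hx hy hf (C' * ‖f‖)
    intro F
    set S : Lp ℂ 2 mu01 := ∑ n ∈ F, (inner ℂ (x n) f : ℂ) • y n with hS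
    have hkey : ∀ w : Lp ℂ 2 mu01, (inner ℂ S w : ℂ) = inner ℂ f (T F w) := by
      intro w
      rw [hS, hTapp, sum_inner, inner_sum]
      apply Finset.sum_congr rfl
      intro n _
      rw [inner_smul_left, inner_smul_right, ← inner_conj_symm f (x n)]
      ring
    have h1 : ‖S‖^2 = (inner ℂ S S : ℂ).re := by
      rw [@norm_sq_eq_re_inner ℂ]
      rfl
    have h2 : (inner ℂ S S : ℂ).re ≤ ‖f‖ * (C' * ‖S‖) := by
      rw [hkey S]
      calc (inner ℂ f (T F S) : ℂ).re ≤ ‖(inner ℂ f (T F S) : ℂ)‖ := Complex.re_le_norm _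
        _ ≤ ‖f‖ * ‖T F S‖ := norm_inner_le_norm f (T F S)
        _ ≤ ‖f‖ * (C' * ‖S‖) := by
            apply mul_le_mul_of_nonneg_left _ (norm_nonneg f)
            calc ‖T F S‖ ≤ ‖T F‖ * ‖S‖ := (T F).le_opNorm S
              _ ≤ C' * ‖S‖ := mul_le_mul_of_nonneg_right (hC' F) (norm_nonneg S)
    have h3 : ‖S‖^2 ≤ ‖f‖ * (C' * ‖S‖) := h1.trans_le h2
    rcases eq_or_lt_of_le (norm_nonneg S) with h0 | h0
    · rw [← h0]
      positivity
    · nlinarith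

end Main

end
end
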